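/- arXiv:2008.09938 — 9 statements merged into one kernel-verified Lean document; each statement's English description precedes it below -/
import Mathlib

section
/- For every α>0, p∈[0,1], ε∈(0,1), and integers n,m≥0, the following integral identity holds: ∫_0^1 αβ^{α-1}[ p(1-β)^n β^m + (1-p)(1-εβ)^n (εβ)^m ] dβ = α B(n+1, m+α) [ p + (1-p) I_ε(m+α, n+1)/ε^α ]. -/
open MeasureTheory

/-- The Beta function `B(a,b) = ∫_0^1 x^(a-1) (1-x)^(b-1) dx`. -/
noncomputable def betaFun (a b : ℝ) : ℝ :=
  ∫ x in (0:ℝ)..1, x ^ (a - 1) * (1 - x) ^ (b - 1)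

/-- The regularized incomplete Beta function
`I_ε(a,b) = (1/B(a,b)) ∫_0^ε x^(a-1) (1-x)^(b-1) dx`. -/
noncomputable def incBeta (ε a b : ℝ) : ℝ :=
  (∫ x in (0:ℝ)..ε, x ^ (a - 1) * (1 - x) ^ (b - 1)) / betaFun a b

lemma betaFun_symm (a b : ℝ) : betaFun a b = betaFun b a := by
  unfold betaFun
  have h := intervalIntegral.integral_comp_sub_left (a := 0) (b := 1)
    (fun y => y ^ (b - 1) * (1 - y) ^ (a - 1)) 1
  simp only [sub_sub_cancel, sub_zero, sub_self] at h
  rw [← h]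
  apply intervalIntegral.integral_congr
  intro x _
  ring

lemma rpow_mul_pow {α : ℝ} (hα : 0 < α) (m : ℕ) {x : ℝ} (hx : 0 ≤ x) :
    x ^ (α - 1) * x ^ m = x ^ ((m : ℝ) + α - 1) := by
  rcases eq_or_lt_of_le hx with h | h
  · subst h
    cases m with
    | zero => norm_num
    | succ k =>
        rw [zero_pow (Nat.succ_ne_zero k), mul_zero, eq_comm, Real.zero_rpow]
        have hk : (0:ℝ) ≤ (k:ℝ) := Nat.cast_nonneg k
        push_cast
        nlinarith
  · rw [← Real.rpow_natCast x m, ← Real.rpow_add h]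
    ring_nf

theorem stmt0 (α p ε : ℝ) (hα : 0 < α) (hp0 : 0 ≤ p) (hp1 : p ≤ 1)
    (hε : ε ∈ Set.Ioo (0:ℝ) 1) (n m : ℕ) :
    (∫ β in (0:ℝ)..1, α * β ^ (α - 1) *
        (p * (1 - β) ^ n * β ^ m + (1 - p) * (1 - ε * β) ^ n * (ε * β) ^ m))
      = α * betaFun ((n : ℝ) + 1) ((m : ℝ) + α) *
          (p + (1 - p) * incBeta ε ((m : ℝ) + α) ((n : ℝ) + 1) / ε ^ α) := by
  obtain ⟨hε0, hε1⟩ := hε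
  set r : ℝ := (m : ℝ) + α - 1 with hr_def
  have hr : -1 < r := by simp only [hr_def]; push_cast; nlinarith [Nat.cast_nonneg (α := ℝ) m]
  -- integrability
  have hint1 : IntervalIntegrable (fun x => x ^ r * (1 - x) ^ n) volume 0 1 :=
    (intervalIntegral.intervalIntegrable_rpow' hr).mul_continuousOn (by fun_prop)
  have hint2 : IntervalIntegrable (fun x => x ^ r * (1 - ε * x) ^ n) volume 0 1 :=
    (intervalIntegral.intervalIntegrable_rpow' hr).mul_continuousOn (by fun_prop)
  set B : ℝ := ∫ x in (0:ℝ)..1, x ^ r * (1 - x) ^ n with hB_def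
  set C : ℝ := ∫ x in (0:ℝ)..ε, x ^ r * (1 - x) ^ n with hC_def
  -- betaFun (m+α) (n+1) = B
  have hbeta : betaFun ((m : ℝ) + α) ((n : ℝ) + 1) = B := by
    rw [hB_def]; unfold betaFun
    apply intervalIntegral.integral_congr
    intro x hx
    rw [Set.uIcc_of_le (by norm_num)] at hx
    have h1x : (0:ℝ) ≤ 1 - x := by linarith [hx.2]
    simp only [add_sub_cancel_right, ← hr_def]
    rw [Real.rpow_natCast]
  -- incBeta numerator = C
  have hC : (∫ x in (0:ℝ)..ε, x ^ ((m : ℝ) + α - 1) * (1 - x) ^ ((n : ℝ) + 1 - 1)) = C := by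
    rw [hC_def]
    apply intervalIntegral.integral_congr
    intro x hx
    rw [Set.uIcc_of_le (le_of_lt hε0)] at hx
    have h1x : (0:ℝ) ≤ 1 - x := by linarith [hx.2, hε1.le]
    simp only [add_sub_cancel_right, ← hr_def]
    rw [Real.rpow_natCast]
  -- B > 0
  have hBpos : 0 < B := by
    apply intervalIntegral.intervalIntegral_pos_of_pos_on hint1 _ (by norm_num)
    intro x hx
    have := Real.rpow_pos_of_pos hx.1 r
    have : (0:ℝ) < (1 - x) ^ n := pow_pos (by linarith [hx.2]) n
    positivity
  have hBne : B ≠ 0 := ne_of_gt hBpos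
  -- rewrite LHS integrand
  have hcongr : (∫ β in (0:ℝ)..1, α * β ^ (α - 1) *
        (p * (1 - β) ^ n * β ^ m + (1 - p) * (1 - ε * β) ^ n * (ε * β) ^ m))
      = ∫ β in (0:ℝ)..1,
          (p * α) * (β ^ r * (1 - β) ^ n) + ((1 - p) * α * ε ^ m) * (β ^ r * (1 - ε * β) ^ n) := by
    apply intervalIntegral.integral_congr
    intro x hx
    rw [Set.uIcc_of_le (by norm_num)] at hx
    have key := rpow_mul_pow hα m hx.1
    rw [← hr_def] at key
    simp only [mul_pow]
    calc α * x ^ (α - 1) *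
          (p * (1 - x) ^ n * x ^ m + (1 - p) * (1 - ε * x) ^ n * (ε ^ m * x ^ m))
        = (p * α) * ((x ^ (α - 1) * x ^ m) * (1 - x) ^ n)
          + ((1 - p) * α * ε ^ m) * ((x ^ (α - 1) * x ^ m) * (1 - ε * x) ^ n) := by ring
      _ = _ := by rw [key]
  rw [hcongr]
  rw [intervalIntegral.integral_add (hint1.const_mul _) (hint2.const_mul _),
    intervalIntegral.integral_const_mul, intervalIntegral.integral_const_mul]
  -- second integral evaluation
  have h4 : (∫ x in (0:ℝ)..1, x ^ r * (1 - ε * x) ^ n) = ε ^ (-r) * ε⁻¹ * C := by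
    have hc := intervalIntegral.integral_comp_mul_left (a := 0) (b := 1)
      (fun x => x ^ r * (1 - x) ^ n) (ne_of_gt hε0)
    simp only [mul_zero, mul_one, smul_eq_mul] at hc
    have hc2 : (∫ x in (0:ℝ)..1, (ε * x) ^ r * (1 - ε * x) ^ n)
        = ∫ x in (0:ℝ)..1, ε ^ r * (x ^ r * (1 - ε * x) ^ n) := by
      apply intervalIntegral.integral_congr
      intro x hx
      rw [Set.uIcc_of_le (by norm_num)] at hx
      dsimp only
      rw [Real.mul_rpow hε0.le hx.1]; ring
    rw [hc2, intervalIntegral.integral_const_mul] at hc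
    have hεr : (ε : ℝ) ^ r ≠ 0 := ne_of_gt (Real.rpow_pos_of_pos hε0 r)
    rw [Real.rpow_neg hε0.le]
    field_simp at hc ⊢
    linarith [hc]
  rw [h4]
  -- RHS rewriting
  rw [betaFun_symm, hbeta]
  unfold incBeta
  rw [hC, hbeta]
  have hεα : (0:ℝ) < ε ^ α := Real.rpow_pos_of_pos hε0 α
  have hpow : (ε : ℝ) ^ m * (ε ^ (-r) * ε⁻¹) = (ε ^ α)⁻¹ := by
    rw [← Real.rpow_natCast ε m, ← Real.rpow_neg_one ε, ← Real.rpow_add hε0,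
      ← Real.rpow_add hε0, ← Real.rpow_neg hε0.le]
    congr 1
    rw [hr_def]; ring
  calc p * α * B + (1 - p) * α * ε ^ m * (ε ^ (-r) * ε⁻¹ * C)
      = p * α * B + (1 - p) * α * (ε ^ m * (ε ^ (-r) * ε⁻¹)) * C := by ring
    _ = p * α * B + (1 - p) * α * (ε ^ α)⁻¹ * C := by rw [hpow]
    _ = α * B * (p + (1 - p) * (C / B) / ε ^ α) := by
        field_simp
end

section
/- For every integer n≥1, the function Pr_{0,n} is a probability mass function on the set of all set partitions of {1,…,n}: it is nonnegative and Σ_𝒜 Pr_{0,n}(𝒜) = 1, where the sum ranges over all set partitions 𝒜 of {1,…,n}. -/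
open MeasureTheory

/-- `P` is a set partition of `{1,…,n}` (modelled as `Fin n`): the blocks are non-empty and
every point lies in exactly one block. -/
def IsSetPartition (n : ℕ) (P : Finset (Finset (Fin n))) : Prop :=
  (∅ ∉ P) ∧ ∀ i : Fin n, ∃! A : Finset (Fin n), A ∈ P ∧ i ∈ A

/-- The type of set partitions of `{1,…,n}`. -/
def SetPartition (n : ℕ) := {P : Finset (Finset (Fin n)) // IsSetPartition n P}

noncomputable instance (n : ℕ) : Fintype (SetPartition n) := by
  unfold SetPartition; exact Fintype.ofFinite _

/-- An enumeration of the blocks of a finite family of blocks by `Fin t`, `t` the number of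
blocks. -/
noncomputable def blockEnum {n : ℕ} (P : Finset (Finset (Fin n))) :
    Fin P.card → Finset (Fin n) :=
  fun j => ((Fintype.equivFinOfCardEq (Fintype.card_coe P)).symm j : Finset (Fin n))

/-- The sizes `n_1, …, n_t` of the blocks of a set partition `P` with `t = P.1.card` blocks. -/
noncomputable def blockSize {n : ℕ} (P : SetPartition n) : Fin P.1.card → ℕ :=
  fun j => (blockEnum P.1 j).card

/-- The exchangeable partition probability function of the quasi-Bernoulli stick-breaking
process with parameters `α`, `p`, `ε ∈ (0,1)`, evaluated on a partition of `n` points into `t`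
blocks of sizes `ns 1, …, ns t`:
`(α^t Γ(α)/Γ(n+α)) (∏_j n_j!) Σ_{σ∈S_t} ∏_j [p+(1-p) I_ε(g_{j+1}(σ)+α, n_{σ_j}+1)/ε^α]
  / [g_j(σ)+α(1-p)(1-ε^{g_j(σ)})]` where `g_j(σ) = Σ_{l=j}^t n_{σ_l}`. -/
noncomputable def eppfEps (α p ε : ℝ) (n t : ℕ) (ns : Fin t → ℕ) : ℝ :=
  α ^ t * Real.Gamma α / Real.Gamma ((n : ℝ) + α) *
    (∏ j, (Nat.factorial (ns j) : ℝ)) *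
    ∑ σ : Equiv.Perm (Fin t), ∏ j,
      (p + (1 - p) *
          incBeta ε (((∑ l ∈ Finset.Ioi j, ns (σ l) : ℕ) : ℝ) + α) ((ns (σ j) : ℝ) + 1)
          / ε ^ α) /
      (((∑ l ∈ Finset.Ici j, ns (σ l) : ℕ) : ℝ) +
        α * (1 - p) * (1 - ε ^ (∑ l ∈ Finset.Ici j, ns (σ l))))

/-- The exchangeable partition probability function of the quasi-Bernoulli stick-breaking
process with `ε = 0` (a finite stick-breaking model with `Geometric(1-p)` number of
components and `Beta(1,α)` proportions):
`(α^t Γ(α)/Γ(n+α)) (∏_j n_j!) Σ_{σ∈S_t} ∏_j [p + 𝟙(j=t)(1-p)/(α B(α, n_{σ_t}+1))]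
  / [g_j(σ)+α(1-p)]` where `g_j(σ) = Σ_{l=j}^t n_{σ_l}`. -/
noncomputable def eppfZero (α p : ℝ) (n t : ℕ) (ns : Fin t → ℕ) : ℝ :=
  α ^ t * Real.Gamma α / Real.Gamma ((n : ℝ) + α) *
    (∏ j, (Nat.factorial (ns j) : ℝ)) *
    ∑ σ : Equiv.Perm (Fin t), ∏ j : Fin t,
      (p + (if j.val = t - 1 then
              (1 - p) / (α * betaFun α ((ns (σ j) : ℝ) + 1)) else 0)) /
      (((∑ l ∈ Finset.Ici j, ns (σ l) : ℕ) : ℝ) + α * (1 - p))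

/-- `Pr_{ε,n}(𝒜)` for a set partition `𝒜` of `{1,…,n}` and `ε ∈ (0,1)`. -/
noncomputable def PrEps (α p ε : ℝ) (n : ℕ) (P : SetPartition n) : ℝ :=
  eppfEps α p ε n P.1.card (blockSize P)

/-- `Pr_{0,n}(𝒜)` for a set partition `𝒜` of `{1,…,n}`. -/
noncomputable def PrZero (α p : ℝ) (n : ℕ) (P : SetPartition n) : ℝ :=
  eppfZero α p n P.1.card (blockSize P)


section Aux
open Finset

lemma betaFun_eq (a b : ℝ) (ha : 0 < a) (hb : 0 < b) :
    betaFun a b = Real.Gamma a * Real.Gamma b / Real.Gamma (a + b) := by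
  have h1 : Complex.betaIntegral a b = ((betaFun a b : ℝ) : ℂ) := by
    rw [Complex.betaIntegral]
    rw [show ((a:ℂ) - 1) = ((a - 1 : ℝ) : ℂ) by push_cast; ring,
        show ((b:ℂ) - 1) = ((b - 1 : ℝ) : ℂ) by push_cast; ring]
    rw [betaFun, ← intervalIntegral.integral_ofReal]
    apply intervalIntegral.integral_congr
    intro x hx
    rw [Set.uIcc_of_le (by norm_num : (0:ℝ) ≤ 1)] at hx
    have hx0 : 0 ≤ x := hx.1
    have hx1 : 0 ≤ 1 - x := by linarith [hx.2]
    simp only [Complex.ofReal_mul]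
    rw [Complex.ofReal_cpow hx0, Complex.ofReal_cpow hx1]
    push_cast
    ring_nf
  have h2 := Complex.Gamma_mul_Gamma_eq_betaIntegral
    (s := (a:ℂ)) (t := (b:ℂ)) (by simpa using ha) (by simpa using hb)
  rw [h1] at h2
  rw [show ((a:ℂ)+(b:ℂ)) = ((a+b : ℝ) : ℂ) by push_cast; ring, Complex.Gamma_ofReal,
    Complex.Gamma_ofReal, Complex.Gamma_ofReal, ← Complex.ofReal_mul, ← Complex.ofReal_mul] at h2
  have h4 := Complex.ofReal_injective h2
  have h5 : Real.Gamma (a + b) ≠ 0 := (Real.Gamma_pos_of_pos (by linarith)).ne'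
  field_simp
  linarith [h4]

noncomputable def asc (x : ℝ) (k : ℕ) : ℝ := ∏ i ∈ Finset.range k, (x + i)

lemma asc_zero (x : ℝ) : asc x 0 = 1 := by simp [asc]

lemma asc_succ (x : ℝ) (k : ℕ) : asc x (k+1) = asc x k * (x + k) := by
  simp [asc, Finset.prod_range_succ]

lemma asc_succ' (x : ℝ) (k : ℕ) : asc x (k+1) = x * asc (x+1) k := by
  rw [asc, Finset.prod_range_succ']
  simp only [asc]
  rw [mul_comm]
  congr 1
  · simp
  · apply Finset.prod_congr rfl; intro i _; push_cast; ring

lemma asc_pos {x : ℝ} (hx : 0 < x) (k : ℕ) : 0 < asc x k := by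
  apply Finset.prod_pos; intro i _; positivity

lemma Gamma_add_nat {x : ℝ} (hx : 0 < x) (k : ℕ) :
    Real.Gamma (x + k) = asc x k * Real.Gamma x := by
  induction k with
  | zero => simp [asc_zero]
  | succ m ih =>
    have : x + (m+1 : ℕ) = (x + m) + 1 := by push_cast; ring
    rw [this, Real.Gamma_add_one (by positivity), ih, asc_succ]; ring

lemma alpha_mul_betaFun {α : ℝ} (hα : 0 < α) (m : ℕ) :
    α * betaFun α ((m:ℝ) + 1) = (m.factorial : ℝ) / asc (α+1) m := by
  rw [betaFun_eq α _ hα (by positivity)]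
  have h1 : Real.Gamma ((m:ℝ)+1) = m.factorial := Real.Gamma_nat_eq_factorial m
  have h2 : α + ((m:ℝ)+1) = α + ((m+1 : ℕ) : ℝ) := by push_cast; ring
  rw [h1, h2, Gamma_add_nat hα, asc_succ']
  have hg : Real.Gamma α ≠ 0 := (Real.Gamma_pos_of_pos hα).ne'
  have ha : asc (α+1) m ≠ 0 := (asc_pos (by linarith) m).ne'
  field_simp

lemma hockey (x : ℝ) (n : ℕ) :
    ∑ k ∈ range (n+1), asc x k / (k.factorial : ℝ) = asc (x+1) n / (n.factorial : ℝ) := by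
  induction n with
  | zero => simp [asc_zero]
  | succ m ih =>
    rw [Finset.sum_range_succ, ih, asc_succ', asc_succ]
    have h1 : ((m+1).factorial : ℝ) = (m.factorial : ℝ) * (m+1) := by
      rw [Nat.factorial_succ]; push_cast; ring
    have h2 : (m.factorial : ℝ) ≠ 0 := by positivity
    rw [h1]
    field_simp
    ring

noncomputable def wgt (α p : ℝ) (m n : ℕ) : ℝ :=
  α * (m.factorial : ℝ) *
    (p + if m = n then (1 - p) / (α * betaFun α ((m:ℝ) + 1)) else 0) /
    ((n : ℝ) + α * (1 - p))

noncomputable def G (α p : ℝ) : List ℕ → ℝ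
  | [] => 1
  | m :: l => wgt α p m (m + l.sum) * G α p l

variable {ι : Type*} [DecidableEq ι]

noncomputable def benum (P : Finset (Finset ι)) : Fin P.card → Finset ι :=
  fun j => ((Fintype.equivFinOfCardEq (Fintype.card_coe P)).symm j : Finset ι)

lemma benum_inj (P : Finset (Finset ι)) : Function.Injective (benum P) := by
  intro a b h
  have := Subtype.coe_injective h
  exact (Fintype.equivFinOfCardEq (Fintype.card_coe P)).symm.injective this

lemma benum_mem (P : Finset (Finset ι)) (j : Fin P.card) : benum P j ∈ P :=
  ((Fintype.equivFinOfCardEq (Fintype.card_coe P)).symm j).2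

lemma benum_surj (P : Finset (Finset ι)) {B : Finset ι} (hB : B ∈ P) :
    ∃ j, benum P j = B :=
  ⟨Fintype.equivFinOfCardEq (Fintype.card_coe P) ⟨B, hB⟩, by simp [benum]⟩

/-- sum over all orderings of the blocks enumerated by `f`. -/
noncomputable def PS (α p : ℝ) (t : ℕ) (f : Fin t → Finset ι) : ℝ :=
  ∑ σ : Equiv.Perm (Fin t), G α p (List.ofFn fun j => (f (σ j)).card)

lemma PS_zero (α p : ℝ) (f : Fin 0 → Finset ι) : PS α p 0 f = 1 := by
  rw [PS]
  rw [Finset.sum_eq_single (1 : Equiv.Perm (Fin 0))]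
  · simp [List.ofFn_zero, G]
  · intro σ _ hσ
    exact absurd (Equiv.ext fun x => x.elim0) hσ
  · simp

lemma PS_comp (α p : ℝ) (t : ℕ) (f : Fin t → Finset ι) (e : Equiv.Perm (Fin t)) :
    PS α p t (f ∘ e) = PS α p t f := by
  rw [PS, PS]
  rw [← Equiv.sum_comp (Equiv.mulLeft e)
    (fun σ : Equiv.Perm (Fin t) => G α p (List.ofFn fun j => (f (σ j)).card))]
  apply Finset.sum_congr rfl
  intro σ _
  rfl

lemma PS_range (α p : ℝ) (t t' : ℕ) (h : t = t') (f : Fin t → Finset ι)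
    (g : Fin t' → Finset ι) (hf : Function.Injective f) (hg : Function.Injective g)
    (hr : ∀ B, (∃ j, f j = B) ↔ ∃ j, g j = B) : PS α p t f = PS α p t' g := by
  subst h
  have he : ∀ j, ∃ k, f k = g j := fun j => (hr (g j)).mpr ⟨j, rfl⟩
  choose e he using he
  have einj : Function.Injective e := by
    intro a b hab
    apply hg
    rw [← he a, ← he b, hab]
  have ebij : Function.Bijective e := (Finite.injective_iff_bijective).mp einj
  have : g = f ∘ (Equiv.ofBijective e ebij) := by
    funext j; simp [Equiv.ofBijective, he]
  rw [this, PS_comp]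

lemma swapsucc_inj {t : ℕ} (i : Fin (t+1)) :
    Function.Injective (fun k : Fin t => Equiv.swap 0 i k.succ) := by
  intro a b hab
  exact Fin.succ_injective _ ((Equiv.swap 0 i).injective hab)

lemma swapsucc_ne {t : ℕ} (i : Fin (t+1)) (k : Fin t) :
    Equiv.swap 0 i k.succ ≠ i := by
  intro h
  apply Fin.succ_ne_zero k
  have h2 := congrArg (Equiv.swap 0 i) h
  rwa [Equiv.swap_apply_self, Equiv.swap_apply_right] at h2

lemma swapsucc_surj {t : ℕ} (i j : Fin (t+1)) (hj : j ≠ i) :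
    ∃ k : Fin t, Equiv.swap 0 i k.succ = j := by
  have h0 : Equiv.swap 0 i j ≠ 0 := by
    intro h
    apply hj
    have := congrArg (Equiv.swap 0 i) h
    rwa [Equiv.swap_apply_self, Equiv.swap_apply_left] at this
  refine ⟨(Equiv.swap 0 i j).pred h0, ?_⟩
  rw [Fin.succ_pred, Equiv.swap_apply_self]

lemma PS_split (α p : ℝ) (t : ℕ) (f : Fin (t+1) → Finset ι) :
    PS α p (t+1) f = ∑ i : Fin (t+1),
      wgt α p (f i).card (∑ j, (f j).card) *
        PS α p t (fun k => f (Equiv.swap 0 i k.succ)) := by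
  rw [PS, ← Equiv.sum_comp (Equiv.Perm.decomposeFin.symm)
    (fun σ : Equiv.Perm (Fin (t+1)) => G α p (List.ofFn fun j => (f (σ j)).card)),
    Fintype.sum_prod_type]
  apply Finset.sum_congr rfl
  intro i _
  rw [PS, Finset.mul_sum]
  apply Finset.sum_congr rfl
  intro σ _
  rw [List.ofFn_succ]
  simp only [Equiv.Perm.decomposeFin_symm_apply_zero,
    Equiv.Perm.decomposeFin_symm_apply_succ]
  rw [G, List.sum_ofFn]
  have hsum : (f i).card + ∑ j : Fin t, (f (Equiv.swap 0 i ((σ j).succ))).card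
      = ∑ j, (f j).card := by
    rw [← Equiv.sum_comp (Equiv.Perm.decomposeFin.symm (i, σ)) (fun j => (f j).card),
      Fin.sum_univ_succ]
    simp only [Equiv.Perm.decomposeFin_symm_apply_zero,
      Equiv.Perm.decomposeFin_symm_apply_succ]
  rw [hsum]

def isPartOf (s : Finset ι) (P : Finset (Finset ι)) : Prop :=
  (∀ B ∈ P, B ≠ ∅) ∧ (∀ B ∈ P, B ⊆ s) ∧ ∀ i ∈ s, ∃! B, B ∈ P ∧ i ∈ B

open Classical in
noncomputable def partsOf (s : Finset ι) : Finset (Finset (Finset ι)) :=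
  s.powerset.powerset.filter (isPartOf s)

lemma mem_partsOf {s : Finset ι} {P : Finset (Finset ι)} :
    P ∈ partsOf s ↔ isPartOf s P := by
  classical
  rw [partsOf]
  simp only [Finset.mem_filter, Finset.mem_powerset]
  constructor
  · tauto
  · intro h
    refine ⟨?_, h⟩
    intro B hB
    exact Finset.mem_powerset.mpr (h.2.1 B hB)

lemma partsOf_empty : partsOf (∅ : Finset ι) = {∅} := by
  ext P
  rw [mem_partsOf, Finset.mem_singleton]
  constructor
  · rintro ⟨h1, h2, _⟩
    rw [Finset.eq_empty_iff_forall_notMem]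
    intro B hB
    exact h1 B hB (Finset.subset_empty.mp (h2 B hB))
  · rintro rfl
    exact ⟨by simp, by simp, by simp⟩

lemma isPartOf.pairwiseDisjoint {s : Finset ι} {P : Finset (Finset ι)}
    (hP : isPartOf s P) {B C : Finset ι} (hB : B ∈ P) (hC : C ∈ P) (hne : B ≠ C) :
    ∀ i, i ∈ B → i ∉ C := by
  intro i hiB hiC
  have his : i ∈ s := hP.2.1 B hB hiB
  obtain ⟨D, _, hD⟩ := hP.2.2 i his
  exact hne ((hD B ⟨hB, hiB⟩).trans (hD C ⟨hC, hiC⟩).symm)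

lemma isPartOf.sum_card {s : Finset ι} {P : Finset (Finset ι)}
    (hP : isPartOf s P) : ∑ B ∈ P, B.card = s.card := by
  classical
  have hs : s = P.biUnion id := by
    ext i
    simp only [Finset.mem_biUnion, id]
    constructor
    · intro hi
      obtain ⟨B, hB, _⟩ := hP.2.2 i hi
      exact ⟨B, hB.1, hB.2⟩
    · rintro ⟨B, hB, hiB⟩
      exact hP.2.1 B hB hiB
  rw [hs, Finset.card_biUnion]
  · rfl
  intro B hB C hC hne
  show Disjoint B C
  rw [Finset.disjoint_left]
  exact fun {a} => hP.pairwiseDisjoint hB hC hne a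

lemma isPartOf.erase {s : Finset ι} {P : Finset (Finset ι)}
    (hP : isPartOf s P) {B : Finset ι} (hB : B ∈ P) :
    isPartOf (s \ B) (P.erase B) := by
  refine ⟨fun C hC => hP.1 C (Finset.mem_of_mem_erase hC), ?_, ?_⟩
  · intro C hC
    have hCB : C ≠ B := Finset.ne_of_mem_erase hC
    have hCP : C ∈ P := Finset.mem_of_mem_erase hC
    intro i hiC
    rw [Finset.mem_sdiff]
    exact ⟨hP.2.1 C hCP hiC, hP.pairwiseDisjoint hCP hB hCB i hiC⟩
  · intro i hi
    rw [Finset.mem_sdiff] at hi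
    obtain ⟨C, ⟨hCP, hiC⟩, hC⟩ := hP.2.2 i hi.1
    have hCB : C ≠ B := fun h => hi.2 (h ▸ hiC)
    refine ⟨C, ⟨Finset.mem_erase.mpr ⟨hCB, hCP⟩, hiC⟩, ?_⟩
    rintro D ⟨hDP, hiD⟩
    exact hC D ⟨Finset.mem_of_mem_erase hDP, hiD⟩

lemma isPartOf.not_mem {s B : Finset ι} {P' : Finset (Finset ι)}
    (hP' : isPartOf (s \ B) P') (hBne : B ≠ ∅) : B ∉ P' := by
  intro hB
  obtain ⟨i, hi⟩ := Finset.nonempty_iff_ne_empty.mpr hBne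
  have := hP'.2.1 B hB hi
  rw [Finset.mem_sdiff] at this
  exact this.2 hi

lemma isPartOf.insert {s B : Finset ι} {P' : Finset (Finset ι)}
    (hBs : B ⊆ s) (hBne : B ≠ ∅) (hP' : isPartOf (s \ B) P') :
    isPartOf s (insert B P') := by
  refine ⟨?_, ?_, ?_⟩
  · intro C hC
    rcases Finset.mem_insert.mp hC with rfl | hC
    · exact hBne
    · exact hP'.1 C hC
  · intro C hC
    rcases Finset.mem_insert.mp hC with rfl | hC
    · exact hBs
    · exact (hP'.2.1 C hC).trans (Finset.sdiff_subset)
  · intro i hi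
    by_cases hiB : i ∈ B
    · refine ⟨B, ⟨Finset.mem_insert_self _ _, hiB⟩, ?_⟩
      rintro D ⟨hDP, hiD⟩
      rcases Finset.mem_insert.mp hDP with rfl | hDP
      · rfl
      · exact absurd hiB (by
          have := hP'.2.1 D hDP hiD
          rw [Finset.mem_sdiff] at this
          exact this.2)
    · have hi' : i ∈ s \ B := Finset.mem_sdiff.mpr ⟨hi, hiB⟩
      obtain ⟨C, ⟨hCP, hiC⟩, hC⟩ := hP'.2.2 i hi'
      refine ⟨C, ⟨Finset.mem_insert_of_mem hCP, hiC⟩, ?_⟩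
      rintro D ⟨hDP, hiD⟩
      rcases Finset.mem_insert.mp hDP with rfl | hDP
      · exact absurd hiD hiB
      · exact hC D ⟨hDP, hiD⟩

lemma isPartOf.nonempty {s : Finset ι} {P : Finset (Finset ι)}
    (hs : s ≠ ∅) (hP : isPartOf s P) : P ≠ ∅ := by
  obtain ⟨i, hi⟩ := Finset.nonempty_iff_ne_empty.mpr hs
  obtain ⟨B, hB, _⟩ := hP.2.2 i hi
  exact Finset.ne_empty_of_mem hB.1

noncomputable def T (α p : ℝ) (s : Finset ι) : ℝ :=
  if hs : s = ∅ then 1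
  else ∑ B ∈ s.powerset.attach,
    if hB : B.1 = ∅ then 0
    else wgt α p B.1.card s.card * T α p (s \ B.1)
termination_by s.card
decreasing_by
  have hsub : B.1 ⊆ s := Finset.mem_powerset.mp B.2
  have h1 : (s \ B.1).card = s.card - B.1.card := Finset.card_sdiff_of_subset hsub
  have h2 : 0 < B.1.card := Finset.card_pos.mpr (Finset.nonempty_iff_ne_empty.mpr hB)
  have h3 : 0 < s.card := Finset.card_pos.mpr (Finset.nonempty_iff_ne_empty.mpr hs)
  omega

lemma T_empty (α p : ℝ) : T α p (∅ : Finset ι) = 1 := by rw [T]; simp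

lemma T_spec (α p : ℝ) {s : Finset ι} (hs : s ≠ ∅) :
    T α p s = ∑ B ∈ s.powerset,
      if B = ∅ then 0 else wgt α p B.card s.card * T α p (s \ B) := by
  rw [T, dif_neg hs, ← Finset.sum_attach s.powerset
    (fun B => if B = ∅ then 0 else wgt α p B.card s.card * T α p (s \ B))]
  apply Finset.sum_congr rfl
  intro B _
  split <;> simp_all

lemma PS_block_split (α p : ℝ) {s : Finset ι} (hs : s ≠ ∅) {P : Finset (Finset ι)}
    (hP : isPartOf s P) :
    PS α p P.card (benum P)
      = ∑ B ∈ P, wgt α p B.card s.card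
          * PS α p (P.erase B).card (benum (P.erase B)) := by
  have key : ∀ (t : ℕ) (f : Fin t → Finset ι), Function.Injective f →
      (∀ j, f j ∈ P) → (∀ B ∈ P, ∃ j, f j = B) → t = P.card →
      PS α p t f = ∑ B ∈ P, wgt α p B.card s.card
        * PS α p (P.erase B).card (benum (P.erase B)) := by
    intro t
    match t with
    | 0 =>
      intro f _ _ hsurj _
      exfalso
      obtain ⟨B, hB⟩ := Finset.nonempty_iff_ne_empty.mpr (hP.nonempty hs)
      obtain ⟨j, _⟩ := hsurj B hB
      exact j.elim0
    | Nat.succ t' =>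
      intro f hinj hmem hsurj hcard
      rw [PS_split]
      have htot : ∑ j, (f j).card = s.card := by
        rw [← hP.sum_card]
        apply Finset.sum_bij (fun j _ => f j)
        · intro j _; exact hmem j
        · intro a _ b _ h; exact hinj h
        · intro B hB
          obtain ⟨j, hj⟩ := hsurj B hB
          exact ⟨j, Finset.mem_univ j, hj⟩
        · intro j _; rfl
      rw [htot]
      apply Finset.sum_bij (fun j _ => f j)
      · intro j _; exact hmem j
      · intro a _ b _ h; exact hinj h
      · intro B hB
        obtain ⟨j, hj⟩ := hsurj B hB
        exact ⟨j, Finset.mem_univ j, hj⟩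
      · intro j _
        congr 1
        have hcard' : t' = (P.erase (f j)).card := by
          rw [Finset.card_erase_of_mem (hmem j)]
          omega
        apply PS_range α p t' (P.erase (f j)).card hcard'
        · exact fun a b h => Fin.succ_injective _
            ((Equiv.swap 0 j).injective (hinj h))
        · exact benum_inj _
        · intro B
          constructor
          · rintro ⟨k, rfl⟩
            apply benum_surj
            apply Finset.mem_erase.mpr
            exact ⟨fun h => swapsucc_ne j k (hinj h), hmem _⟩
          · rintro ⟨k, rfl⟩
            have hBP := benum_mem (P.erase (f j)) k
            rw [Finset.mem_erase] at hBP
            obtain ⟨j', hj'⟩ := hsurj _ hBP.2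
            have hne : j' ≠ j := by
              rintro rfl; exact hBP.1 hj'.symm
            obtain ⟨k', hk'⟩ := swapsucc_surj j j' hne
            exact ⟨k', by rw [hk', hj']⟩
  exact key P.card (benum P) (benum_inj P) (benum_mem P)
    (fun B hB => benum_surj P hB) rfl

noncomputable def SP (α p : ℝ) (s : Finset ι) : ℝ :=
  ∑ P ∈ partsOf s, PS α p P.card (benum P)

lemma SP_eq_T (α p : ℝ) (s : Finset ι) : SP α p s = T α p s := by
  have H : ∀ N (s : Finset ι), s.card = N → SP α p s = T α p s := by
    intro N
    induction N using Nat.strong_induction_on with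
    | _ N ih =>
    intro s hN
    rcases eq_or_ne s ∅ with rfl | hs
    · rw [SP, partsOf_empty, Finset.sum_singleton, T_empty]
      exact PS_zero α p _
    · rw [SP]
      rw [Finset.sum_congr rfl (fun P hP => PS_block_split α p hs (mem_partsOf.mp hP))]
      rw [Finset.sum_sigma' (partsOf s) (fun P => P)
        (fun P B => wgt α p B.card s.card
          * PS α p (P.erase B).card (benum (P.erase B)))]
      rw [T_spec α p hs]
      rw [← Finset.sum_erase s.powerset
        (f := fun B => if B = ∅ then (0:ℝ) else wgt α p B.card s.card * T α p (s \ B))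
        (a := ∅) (by simp)]
      rw [Finset.sum_congr rfl (g := fun B => wgt α p B.card s.card * T α p (s \ B))
        (fun B hB => if_neg (Finset.mem_erase.mp hB).1)]
      have hT : ∀ B ∈ s.powerset.erase ∅,
          wgt α p B.card s.card * T α p (s \ B)
            = ∑ P' ∈ partsOf (s \ B), wgt α p B.card s.card
                * PS α p P'.card (benum P') := by
        intro B hB
        rw [Finset.mem_erase, Finset.mem_powerset] at hB
        have hlt : (s \ B).card < s.card := by
          rw [Finset.card_sdiff_of_subset hB.2]
          have h2 : 0 < B.card := Finset.card_pos.mpr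
            (Finset.nonempty_iff_ne_empty.mpr hB.1)
          have h3 : 0 < s.card := Finset.card_pos.mpr
            (Finset.nonempty_iff_ne_empty.mpr hs)
          have h4 : B.card ≤ s.card := Finset.card_le_card hB.2
          omega
        rw [← ih _ (hN ▸ hlt) _ rfl, SP, Finset.mul_sum]
      rw [Finset.sum_congr rfl hT]
      rw [Finset.sum_sigma' (s.powerset.erase ∅) (fun B => partsOf (s \ B))
        (fun B P' => wgt α p B.card s.card * PS α p P'.card (benum P'))]
      apply Finset.sum_nbij' (fun x => ⟨x.2, x.1.erase x.2⟩)
        (fun y => ⟨insert y.1 y.2, y.1⟩)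
      · rintro ⟨P, B⟩ hx
        rw [Finset.mem_sigma] at hx
        obtain ⟨hPs, hBP⟩ := hx
        have hP := mem_partsOf.mp hPs
        rw [Finset.mem_sigma]
        constructor
        · rw [Finset.mem_erase, Finset.mem_powerset]
          exact ⟨hP.1 B hBP, hP.2.1 B hBP⟩
        · exact mem_partsOf.mpr (hP.erase hBP)
      · rintro ⟨B, P'⟩ hy
        rw [Finset.mem_sigma] at hy
        obtain ⟨hBs, hP's⟩ := hy
        rw [Finset.mem_erase, Finset.mem_powerset] at hBs
        have hP' := mem_partsOf.mp hP's
        rw [Finset.mem_sigma]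
        exact ⟨mem_partsOf.mpr (hP'.insert hBs.2 hBs.1),
          Finset.mem_insert_self _ _⟩
      · rintro ⟨P, B⟩ hx
        rw [Finset.mem_sigma] at hx
        have hBP := hx.2
        simp only
        congr 1
        exact Finset.insert_erase hBP
      · rintro ⟨B, P'⟩ hy
        rw [Finset.mem_sigma] at hy
        obtain ⟨hBs, hP's⟩ := hy
        rw [Finset.mem_erase, Finset.mem_powerset] at hBs
        have hP' := mem_partsOf.mp hP's
        simp only
        congr 1
        exact Finset.erase_insert (hP'.not_mem hBs.1)
      · rintro ⟨P, B⟩ _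
        rfl
  exact H s.card s rfl

lemma T_eq {α p : ℝ} (hα : 0 < α) (hp : p ∈ Set.Ioo (0:ℝ) 1) (s : Finset ι) :
    T α p s = asc α s.card := by
  obtain ⟨hp0, hp1⟩ := hp
  have H : ∀ N (s : Finset ι), s.card = N → T α p s = asc α N := by
    intro N
    induction N using Nat.strong_induction_on with
    | _ N ih =>
    intro s hN
    subst hN
    rcases eq_or_ne s ∅ with rfl | hs
    · simp [T_empty, asc_zero]
    have hcard : 0 < s.card := Finset.card_pos.mpr (Finset.nonempty_iff_ne_empty.mpr hs)
    set n := s.card with hn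
    have hden : (0:ℝ) < (n:ℝ) + α * (1 - p) := by
      have : (0:ℝ) < α * (1-p) := by nlinarith
      positivity
    rw [T_spec α p hs]
    -- rewrite each term to depend only on the card
    have step1 : ∀ B ∈ s.powerset,
        (if B = ∅ then 0 else wgt α p B.card s.card * T α p (s \ B))
        = (if B.card = 0 then 0 else wgt α p B.card n * asc α (n - B.card)) := by
      intro B hB
      have hsub : B ⊆ s := Finset.mem_powerset.mp hB
      rcases eq_or_ne B ∅ with rfl | hBne
      · simp
      have h2 : 0 < B.card := Finset.card_pos.mpr (Finset.nonempty_iff_ne_empty.mpr hBne)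
      rw [if_neg hBne, if_neg (by omega)]
      congr 1
      have hlt : (s \ B).card < n := by
        rw [Finset.card_sdiff_of_subset hsub]; omega
      rw [ih _ hlt _ rfl, Finset.card_sdiff_of_subset hsub]
    rw [Finset.sum_congr rfl step1]
    rw [Finset.sum_powerset]
    have step2 : ∀ j ∈ range (s.card + 1),
        (∑ B ∈ powersetCard j s, if B.card = 0 then 0 else wgt α p B.card n * asc α (n - B.card))
        = (n.choose j) • (if j = 0 then 0 else wgt α p j n * asc α (n - j)) := by
      intro j _
      have := Finset.sum_powersetCard j s
        (fun m => if m = 0 then (0:ℝ) else wgt α p m n * asc α (n - m))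
      rw [this]
    rw [Finset.sum_congr rfl step2]
    -- now a pure computation
    simp only [nsmul_eq_mul]
    rw [← hn]
    rw [Finset.sum_range_succ]
    have hlast : (↑(n.choose n) : ℝ) * (if n = 0 then 0 else wgt α p n n * asc α (n - n))
        = α * (n.factorial : ℝ) * (p + (1-p) * asc (α+1) n / (n.factorial : ℝ))
          / ((n:ℝ) + α * (1-p)) := by
      rw [if_neg (by omega), Nat.choose_self, Nat.sub_self, asc_zero, wgt, if_pos rfl]
      rw [alpha_mul_betaFun hα n]
      have h1 : (n.factorial : ℝ) ≠ 0 := by positivity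
      have h2 : asc (α+1) n ≠ 0 := (asc_pos (by linarith) n).ne'
      field_simp
      simp
    rw [hlast]
    have hmid : ∀ m ∈ range n,
        (↑(n.choose m) : ℝ) * (if m = 0 then 0 else wgt α p m n * asc α (n - m))
        = if m = 0 then 0 else
            (↑(n.choose m) : ℝ) * (α * (m.factorial : ℝ) * p / ((n:ℝ) + α * (1-p)) * asc α (n-m)) := by
      intro m hm
      rcases eq_or_ne m 0 with rfl | hm0
      · simp
      · simp only [mem_range] at hm
        rw [if_neg hm0, if_neg hm0, wgt, if_neg (by omega)]
        norm_num
    rw [Finset.sum_congr rfl hmid]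
    have key : ∑ m ∈ range (n+1), (n.choose m : ℝ) * m.factorial * asc α (n - m)
        = asc (α+1) n := by
      rw [← Finset.sum_range_reflect]
      have e : ∀ j ∈ range (n+1),
          (n.choose (n + 1 - 1 - j) : ℝ) * (n + 1 - 1 - j).factorial
            * asc α (n - (n + 1 - 1 - j))
          = (n.factorial : ℝ) * (asc α j / j.factorial) := by
        intro j hj
        simp only [mem_range] at hj
        have hj' : j ≤ n := by omega
        have h0 : n + 1 - 1 - j = n - j := by omega
        rw [h0, Nat.sub_sub_self hj', Nat.choose_symm hj']
        have h1 := Nat.choose_mul_factorial_mul_factorial hj'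
        have h2 : (n.choose j : ℝ) * j.factorial * (n-j).factorial = n.factorial := by
          exact_mod_cast congrArg Nat.cast h1
        have h3 : (j.factorial : ℝ) ≠ 0 := by positivity
        field_simp
        linear_combination asc α j * h2
      rw [Finset.sum_congr rfl e, ← Finset.mul_sum, hockey α n]
      have h3 : (n.factorial : ℝ) ≠ 0 := by positivity
      field_simp
    -- split the m = 0 term out of `key`
    have e1 : ∀ m ∈ range n,
        (if m = 0 then (0:ℝ) else (n.choose m : ℝ) *
          (α * (m.factorial : ℝ) * p / ((n:ℝ) + α * (1-p)) * asc α (n-m)))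
        = (α * p / ((n:ℝ) + α * (1-p))) *
          (if m = 0 then 0 else (n.choose m : ℝ) * m.factorial * asc α (n - m)) := by
      intro m _
      split <;> ring
    rw [Finset.sum_congr rfl e1, ← Finset.mul_sum]
    have e2 : ∑ m ∈ range n,
        (if m = 0 then (0:ℝ) else (n.choose m : ℝ) * m.factorial * asc α (n - m))
        = asc (α+1) n - (n.factorial : ℝ) - asc α n := by
      rw [Finset.sum_range_succ] at key
      have e3 : ∀ m ∈ range n,
          ((n.choose m : ℝ) * m.factorial * asc α (n - m))
          = (if m = 0 then (0:ℝ) else (n.choose m : ℝ) * m.factorial * asc α (n - m))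
            + (if m = 0 then asc α n else 0) := by
        intro m _
        rcases eq_or_ne m 0 with rfl | h
        · simp
        · simp [h]
      rw [Finset.sum_congr rfl e3, Finset.sum_add_distrib, Finset.sum_ite_eq' (range n) 0
        (fun _ => asc α n), if_pos (Finset.mem_range.mpr hcard)] at key
      simp only [Nat.choose_self, Nat.sub_self, asc_zero, Nat.cast_one] at key
      linarith [key]
    rw [e2]
    have habc : α * asc (α+1) n = asc α n * (α + n) := by
      rw [← asc_succ', asc_succ]
    have h3 : (n.factorial : ℝ) ≠ 0 := by positivity
    rw [show α * p / ((n:ℝ) + α*(1-p)) * (asc (α+1) n - (n.factorial:ℝ) - asc α n)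
        + α * (n.factorial:ℝ) * (p + (1-p) * asc (α+1) n / (n.factorial:ℝ)) / ((n:ℝ) + α*(1-p))
        = (α * asc (α+1) n - α * p * asc α n) / ((n:ℝ) + α*(1-p)) by
      field_simp
      ring]
    rw [div_eq_iff hden.ne']
    linear_combination habc
  exact H s.card s rfl

lemma sum_Ici_succ {t : ℕ} (v : Fin (t+1) → ℕ) (j : Fin t) :
    ∑ l ∈ Ici j.succ, v l = ∑ l ∈ Ici j, v l.succ := by
  have hmap : Ici j.succ = (Ici j).map (Fin.succEmb t) := by
    ext l
    simp only [Finset.mem_map, Finset.mem_Ici]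
    constructor
    · intro hl
      cases l using Fin.cases with
      | zero => exact absurd hl (by simp [Fin.le_def])
      | succ m =>
        refine ⟨m, ?_, rfl⟩
        rw [Fin.succ_le_succ_iff] at hl
        exact hl
    · rintro ⟨m, hm, rfl⟩
      simpa [Fin.succ_le_succ_iff] using hm
  rw [hmap, Finset.sum_map]
  rfl

lemma Ici_zero_eq_univ {t : ℕ} : (Ici (0 : Fin (t+1))) = Finset.univ := by
  ext l; simp [Fin.zero_le]

lemma G_ofFn (α p : ℝ) : ∀ (t : ℕ) (v : Fin t → ℕ), (∀ j, 0 < v j) →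
    G α p (List.ofFn v) = α ^ t * (∏ j, ((v j).factorial : ℝ)) *
      ∏ j : Fin t,
        (p + (if j.val = t - 1 then
            (1 - p) / (α * betaFun α ((v j : ℝ) + 1)) else 0)) /
        (((∑ l ∈ Finset.Ici j, v l : ℕ) : ℝ) + α * (1 - p)) := by
  intro t
  induction t with
  | zero => intro v _; simp [G]
  | succ t ih =>
    intro v hv
    rw [List.ofFn_succ, G, List.sum_ofFn]
    rw [ih (fun j => v j.succ) (fun j => hv j.succ)]
    rw [Fin.prod_univ_succ (fun j => ((v j).factorial : ℝ))]
    rw [Fin.prod_univ_succ (fun j : Fin (t+1) =>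
      (p + (if j.val = (t+1) - 1 then
          (1 - p) / (α * betaFun α ((v j : ℝ) + 1)) else 0)) /
      (((∑ l ∈ Finset.Ici j, v l : ℕ) : ℝ) + α * (1 - p)))]
    have htot : v 0 + ∑ j : Fin t, v j.succ = ∑ l ∈ Ici (0 : Fin (t+1)), v l := by
      rw [Ici_zero_eq_univ, Fin.sum_univ_succ]
    have hwgt : wgt α p (v 0) (v 0 + ∑ j : Fin t, v j.succ)
        = α * ((v 0).factorial : ℝ) *
          ((p + (if (0 : Fin (t+1)).val = (t+1) - 1 then
              (1 - p) / (α * betaFun α ((v 0 : ℝ) + 1)) else 0)) /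
            (((∑ l ∈ Finset.Ici (0 : Fin (t+1)), v l : ℕ) : ℝ) + α * (1 - p))) := by
      rw [wgt]
      have hcond : (v 0 = v 0 + ∑ j : Fin t, v j.succ) ↔ ((0 : Fin (t+1)).val = (t+1) - 1) := by
        simp only [Fin.val_zero]
        constructor
        · intro h
          rcases Nat.eq_zero_or_pos t with rfl | ht
          · rfl
          · exfalso
            have h1 : 0 < v (⟨0, ht⟩ : Fin t).succ := hv _
            have h2 : v (⟨0, ht⟩ : Fin t).succ ≤ ∑ j : Fin t, v j.succ :=
              Finset.single_le_sum (f := fun j : Fin t => v j.succ)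
                (fun j _ => Nat.zero_le _) (Finset.mem_univ _)
            omega
        · intro h
          have ht : t = 0 := by omega
          subst ht
          simp
      rw [← htot]
      by_cases h : v 0 = v 0 + ∑ j : Fin t, v j.succ
      · rw [if_pos h, if_pos (hcond.mp h)]
        push_cast
        ring
      · rw [if_neg h, if_neg (fun hc => h (hcond.mpr hc))]
        push_cast
        ring
    rw [hwgt]
    have hsucc : ∀ j : Fin t,
        (p + (if j.val = t - 1 then
            (1 - p) / (α * betaFun α ((v j.succ : ℝ) + 1)) else 0)) /
          (((∑ l ∈ Finset.Ici j, v l.succ : ℕ) : ℝ) + α * (1 - p))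
        = (p + (if (j.succ).val = (t+1) - 1 then
            (1 - p) / (α * betaFun α ((v j.succ : ℝ) + 1)) else 0)) /
          (((∑ l ∈ Finset.Ici j.succ, v l : ℕ) : ℝ) + α * (1 - p)) := by
      intro j
      rw [sum_Ici_succ]
      have : (j.val = t - 1) ↔ ((j.succ).val = (t+1) - 1) := by
        rw [Fin.val_succ]
        have := j.isLt
        omega
      by_cases h : j.val = t - 1
      · rw [if_pos h, if_pos (this.mp h)]
      · rw [if_neg h, if_neg (fun hc => h (this.mpr hc))]
    rw [Finset.prod_congr rfl (fun j _ => hsucc j)]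
    push_cast
    ring

end Aux

section Hookup
open Finset

lemma blockEnum_eq_benum {n : ℕ} (P : Finset (Finset (Fin n))) :
    blockEnum P = benum P := rfl

lemma isSetPartition_iff {n : ℕ} (P : Finset (Finset (Fin n))) :
    P ∈ partsOf (univ : Finset (Fin n)) ↔ IsSetPartition n P := by
  rw [mem_partsOf]
  constructor
  · rintro ⟨h1, _, h3⟩
    exact ⟨fun h => h1 ∅ h rfl, fun i => h3 i (mem_univ i)⟩
  · rintro ⟨h1, h2⟩
    exact ⟨fun B hB hBe => h1 (hBe ▸ hB), fun B _ => subset_univ B, fun i _ => h2 i⟩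

lemma blockSize_pos {n : ℕ} (P : SetPartition n) (j : Fin P.1.card) :
    0 < blockSize P j := by
  rw [blockSize]
  apply Finset.card_pos.mpr
  apply Finset.nonempty_iff_ne_empty.mpr
  intro h
  have hmem : blockEnum P.1 j ∈ P.1 := by
    rw [blockEnum_eq_benum]; exact benum_mem P.1 j
  exact P.2.1 (h ▸ hmem)

lemma PrZero_eq {n : ℕ} (α p : ℝ) (P : SetPartition n) :
    PrZero α p n P = Real.Gamma α / Real.Gamma ((n:ℝ) + α)
      * PS α p P.1.card (benum P.1) := by
  rw [PrZero, eppfZero, PS]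
  have hG : ∀ σ : Equiv.Perm (Fin P.1.card),
      G α p (List.ofFn fun j => (benum P.1 (σ j)).card)
      = α ^ P.1.card * (∏ j, ((blockSize P j).factorial : ℝ)) *
        ∏ j, (p + if j.val = P.1.card - 1 then
              (1-p)/(α * betaFun α ((blockSize P (σ j) : ℝ) + 1)) else 0) /
          (((∑ l ∈ Ici j, blockSize P (σ l) : ℕ) : ℝ) + α * (1-p)) := by
    intro σ
    rw [show (fun j => (benum P.1 (σ j)).card) = (fun j => blockSize P (σ j)) from rfl]
    rw [G_ofFn α p _ (fun j => blockSize P (σ j)) (fun j => blockSize_pos P (σ j))]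
    congr 2
    exact Equiv.prod_comp σ (fun j => ((blockSize P j).factorial : ℝ))
  rw [Finset.sum_congr rfl (fun σ _ => hG σ), ← Finset.mul_sum]
  ring

end Hookup

/-- For `α > 0` and `p ∈ (0,1)`, `Pr_{0,n}` is a probability mass function on the set of all
set partitions of `{1,…,n}`. -/
theorem stmt3 (α p : ℝ) (hα : 0 < α) (hp : p ∈ Set.Ioo (0:ℝ) 1) (n : ℕ) (hn : 1 ≤ n) :
    (∀ P : SetPartition n, 0 ≤ PrZero α p n P) ∧
      ∑ P : SetPartition n, PrZero α p n P = 1 := by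
  obtain ⟨hp0, hp1⟩ := hp
  have hΓα : 0 < Real.Gamma α := Real.Gamma_pos_of_pos hα
  have hΓnα : 0 < Real.Gamma ((n:ℝ) + α) := Real.Gamma_pos_of_pos (by positivity)
  constructor
  · intro P
    rw [PrZero, eppfZero]
    apply mul_nonneg (mul_nonneg _ _) _
    · apply div_nonneg _ hΓnα.le
      positivity
    · positivity
    · apply Finset.sum_nonneg
      intro σ _
      apply Finset.prod_nonneg
      intro j _
      apply div_nonneg
      · apply add_nonneg hp0.le
        split
        · have h := alpha_mul_betaFun hα (blockSize P (σ j))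
          have h3 : (0:ℝ) < asc (α+1) (blockSize P (σ j)) :=
            asc_pos (by linarith) _
          have h2 : (0:ℝ) < ((blockSize P (σ j)).factorial : ℝ)
              / asc (α+1) (blockSize P (σ j)) := by positivity
          apply div_nonneg (by linarith)
          linarith [h, h2]
        · exact le_refl 0
      · have h1 : (0:ℝ) < α * (1 - p) := by nlinarith
        positivity
  · have hsum : ∑ P : SetPartition n, PrZero α p n P
        = Real.Gamma α / Real.Gamma ((n:ℝ) + α) * SP α p (Finset.univ : Finset (Fin n)) := by
      rw [Finset.sum_congr rfl (fun P _ => PrZero_eq α p P), ← Finset.mul_sum]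
      congr 1
      rw [SP]
      apply Finset.sum_bij (fun (P : SetPartition n) _ => P.1)
      · intro P _
        exact (isSetPartition_iff P.1).mpr P.2
      · intro P _ Q _ h
        exact Subtype.ext h
      · intro Q hQ
        exact ⟨⟨Q, (isSetPartition_iff Q).mp hQ⟩, Finset.mem_univ _, rfl⟩
      · intro P _
        rfl
    rw [hsum, SP_eq_T, T_eq hα ⟨hp0, hp1⟩]
    rw [show ((Finset.univ : Finset (Fin n)).card) = n by
      rw [Finset.card_univ, Fintype.card_fin]]
    have hΓ : Real.Gamma ((n:ℝ) + α) = asc α n * Real.Gamma α := by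
      rw [show ((n:ℝ) + α) = α + (n:ℕ) by push_cast; ring]
      exact Gamma_add_nat hα n
    rw [hΓ]
    have h2 : asc α n ≠ 0 := (asc_pos hα n).ne'
    field_simp
end

section
/- Let α>0, p∈(0,1), n≥1 an integer, and ε∈(0,1) with ε ≤ 1/n. Then for every set partition 𝒜 of {1,…,n}, Pr_{0,n}(𝒜) ≤ (1 + αnε/(α+1-αεn)) · Pr_{ε,n}(𝒜). -/
open MeasureTheory

lemma intble (a : ℝ) (ha : 0 < a) (m : ℕ) (c : ℝ) (hc0 : 0 ≤ c) (hc1 : c ≤ 1) :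
    IntervalIntegrable (fun x : ℝ => x ^ (a - 1) * (1 - x) ^ (m : ℝ)) volume 0 c := by
  apply IntervalIntegrable.mono_fun
    (intervalIntegral.intervalIntegrable_rpow' (show (-1:ℝ) < a - 1 by linarith) (a := 0) (b := c))
  · apply Measurable.aestronglyMeasurable
    fun_prop
  · rw [Set.uIoc_of_le hc0]
    filter_upwards [ae_restrict_mem measurableSet_Ioc] with x hx
    have hx0 : 0 < x := hx.1
    have hx1 : x ≤ 1 := hx.2.trans hc1
    simp only [Real.norm_eq_abs]
    rw [abs_of_nonneg (mul_nonneg (Real.rpow_nonneg hx0.le _) (Real.rpow_nonneg (by linarith) _)),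
      abs_of_nonneg (Real.rpow_nonneg hx0.le _)]
    exact mul_le_of_le_one_right (Real.rpow_nonneg hx0.le _)
      (Real.rpow_le_one (by linarith) (by linarith) (Nat.cast_nonneg m))

lemma betaFun_pos (a : ℝ) (ha : 0 < a) (m : ℕ) : 0 < betaFun a ((m : ℝ) + 1) := by
  unfold betaFun
  rw [show (m : ℝ) + 1 - 1 = (m : ℝ) by ring]
  apply intervalIntegral.intervalIntegral_pos_of_pos_on (intble a ha m 1 zero_le_one le_rfl)
  · intro x hx
    exact mul_pos (Real.rpow_pos_of_pos hx.1 _) (Real.rpow_pos_of_pos (by linarith [hx.2]) _)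
  · norm_num

lemma integ_nonneg (a b c : ℝ) (hc0 : 0 ≤ c) (hc1 : c ≤ 1) :
    0 ≤ ∫ x in (0:ℝ)..c, x ^ (a - 1) * (1 - x) ^ (b - 1) := by
  apply intervalIntegral.integral_nonneg hc0
  intro x hx
  exact mul_nonneg (Real.rpow_nonneg hx.1 _) (Real.rpow_nonneg (by linarith [hx.2.trans hc1]) _)

lemma incBeta_nonneg (ε a b : ℝ) (hε0 : 0 ≤ ε) (hε1 : ε ≤ 1) : 0 ≤ incBeta ε a b :=
  div_nonneg (integ_nonneg a b ε hε0 hε1) (integ_nonneg a b 1 zero_le_one le_rfl)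

lemma key (a : ℝ) (ha : 0 < a) (m : ℕ) (ε : ℝ) (hε0 : 0 < ε) (hε1 : ε < 1) :
    ε ^ a * (1 - a * m * ε / (a + 1)) ≤
      a * ∫ x in (0:ℝ)..ε, x ^ (a - 1) * (1 - x) ^ (m : ℝ) := by
  have hi1 : IntervalIntegrable (fun x : ℝ => x ^ (a - 1)) volume 0 ε :=
    intervalIntegral.intervalIntegrable_rpow' (by linarith)
  have hi2 : IntervalIntegrable (fun x : ℝ => (m : ℝ) * x ^ a) volume 0 ε :=
    (intervalIntegral.intervalIntegrable_rpow' (by linarith)).const_mul _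
  have h1 : IntervalIntegrable (fun x : ℝ => x ^ (a - 1) - (m : ℝ) * x ^ a) volume 0 ε :=
    hi1.sub hi2
  have h2 := intble a ha m ε hε0.le hε1.le
  have hmono : (∫ x in (0:ℝ)..ε, (x ^ (a - 1) - (m : ℝ) * x ^ a)) ≤
      ∫ x in (0:ℝ)..ε, x ^ (a - 1) * (1 - x) ^ (m : ℝ) := by
    apply intervalIntegral.integral_mono_on hε0.le h1 h2
    intro x hx
    rcases eq_or_lt_of_le hx.1 with h | h
    · simp [← h, Real.zero_rpow ha.ne', Real.one_rpow]
    · have hx1 : x ≤ 1 := hx.2.trans hε1.le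
      have hb : 1 - (m : ℝ) * x ≤ (1 - x) ^ (m : ℝ) := by
        rw [Real.rpow_natCast]
        have := one_add_mul_le_pow (a := -x) (by linarith) m
        rw [show (1:ℝ) + -x = 1 - x by ring] at this
        linarith
      have hxpow : x ^ a = x ^ (a - 1) * x := by
        rw [← Real.rpow_add_one h.ne' (a - 1)]
        ring_nf
      calc x ^ (a - 1) - (m : ℝ) * x ^ a = x ^ (a - 1) * (1 - (m : ℝ) * x) := by
            rw [hxpow]; ring
        _ ≤ x ^ (a - 1) * (1 - x) ^ (m : ℝ) :=
            mul_le_mul_of_nonneg_left hb (Real.rpow_nonneg hx.1 _)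
  have hcomp : (∫ x in (0:ℝ)..ε, (x ^ (a - 1) - (m : ℝ) * x ^ a)) =
      ε ^ a / a - (m : ℝ) * (ε ^ (a + 1) / (a + 1)) := by
    rw [intervalIntegral.integral_sub hi1 hi2, intervalIntegral.integral_const_mul,
      integral_rpow (Or.inl (by linarith : (-1:ℝ) < a - 1)),
      integral_rpow (Or.inl (by linarith : (-1:ℝ) < a))]
    rw [show a - 1 + 1 = a by ring, Real.zero_rpow ha.ne',
      Real.zero_rpow (by linarith : a + 1 ≠ 0)]
    ring
  have hε' : ε ^ (a + 1) = ε ^ a * ε := Real.rpow_add_one hε0.ne' a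
  have heq : a * (ε ^ a / a - (m : ℝ) * (ε ^ (a + 1) / (a + 1))) =
      ε ^ a * (1 - a * m * ε / (a + 1)) := by
    rw [hε']; field_simp
  rw [← heq, ← hcomp]
  exact mul_le_mul_of_nonneg_left hmono ha.le

lemma sum_helper {ι : Type*} [Fintype ι] (X K : ℝ) (f g : ι → ℝ) (hX : 0 ≤ X)
    (h : ∀ i, f i ≤ K * g i) : X * ∑ i, f i ≤ K * (X * ∑ i, g i) := by
  have h2 : ∑ i, f i ≤ K * ∑ i, g i := by
    rw [Finset.mul_sum]; exact Finset.sum_le_sum fun i _ => h i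
  calc X * ∑ i, f i ≤ X * (K * ∑ i, g i) := mul_le_mul_of_nonneg_left h2 hX
    _ = K * (X * ∑ i, g i) := by ring

lemma prod_helper {t : ℕ} (ht : 1 ≤ t) (K : ℝ) (hK : 1 ≤ K) (f g : Fin t → ℝ)
    (hf : ∀ j, 0 ≤ f j)
    (h1 : ∀ j : Fin t, j.val ≠ t - 1 → f j ≤ g j)
    (h2 : ∀ j : Fin t, j.val = t - 1 → f j ≤ K * g j) :
    ∏ j, f j ≤ K * ∏ j, g j := by
  have hlt : t - 1 < t := by omega
  calc ∏ j, f j ≤ ∏ j, ((if j = (⟨t - 1, hlt⟩ : Fin t) then K else 1) * g j) := by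
        apply Finset.prod_le_prod (fun j _ => hf j)
        intro j _
        by_cases hj : j = (⟨t - 1, hlt⟩ : Fin t)
        · rw [if_pos hj]; exact h2 j (by rw [hj])
        · rw [if_neg hj, one_mul]; exact h1 j (fun h => hj (Fin.ext h))
    _ = (∏ j, (if j = (⟨t - 1, hlt⟩ : Fin t) then K else 1)) * ∏ j, g j :=
        Finset.prod_mul_distrib
    _ = K * ∏ j, g j := by
        rw [Finset.prod_ite_eq' Finset.univ (⟨t - 1, hlt⟩ : Fin t) (fun _ => K)]
        simp


set_option maxHeartbeats 1000000 in
lemma eppf_le (α p ε : ℝ) (hα : 0 < α) (hp0 : 0 < p) (hp1 : p < 1)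
    (hε0 : 0 < ε) (hε1 : ε < 1) (n t : ℕ) (hn : 1 ≤ n) (ht : 1 ≤ t)
    (hεn : ε ≤ 1 / n) (ns : Fin t → ℕ) (hns1 : ∀ j, 1 ≤ ns j) (hnsn : ∀ j, ns j ≤ n) :
    eppfZero α p n t ns ≤ (1 + α * n * ε / (α + 1 - α * ε * n)) * eppfEps α p ε n t ns := by
  have hn0 : (0:ℝ) < n := by exact_mod_cast hn
  have hεn' : ε * n ≤ 1 := by
    rw [le_div_iff₀ hn0] at hεn; linarith
  have hD : 0 < α + 1 - α * ε * n := by nlinarith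
  set c : ℝ := α * n * ε / (α + 1 - α * ε * n) with hc_def
  have hc : 0 ≤ c := div_nonneg (by positivity) hD.le
  have key2 : ∀ m : ℕ, m ≤ n → 1 ≤ (1 + c) * (1 - α * m * ε / (α + 1)) := by
    intro m hm
    have hm' : (m : ℝ) ≤ n := Nat.cast_le.mpr hm
    have h1 : α * m * ε ≤ α * ε * n := by
      nlinarith [mul_le_mul_of_nonneg_left hm' (mul_pos hα hε0).le]
    rw [show (1:ℝ) + c = (α + 1) / (α + 1 - α * ε * n) by rw [hc_def, one_add_div hD.ne']; congr 1; ring]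
    rw [div_mul_eq_mul_div, le_div_iff₀ hD]
    have he : (α + 1) * (1 - α * m * ε / (α + 1)) = α + 1 - α * m * ε := by
      field_simp
    rw [he]
    linarith
  unfold eppfZero eppfEps
  apply sum_helper
  · have hg1 : 0 < Real.Gamma α := Real.Gamma_pos_of_pos hα
    have hg2 : 0 < Real.Gamma ((n:ℝ) + α) := Real.Gamma_pos_of_pos (by positivity)
    have : (0:ℝ) ≤ ∏ j, (Nat.factorial (ns j) : ℝ) :=
      Finset.prod_nonneg fun j _ => Nat.cast_nonneg _
    positivity
  intro σ
  apply prod_helper ht _ (by linarith)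
  · -- nonnegativity of zero-terms
    intro j
    apply div_nonneg
    · have hbp := betaFun_pos α hα (ns (σ j))
      split
      · have : 0 ≤ (1 - p) / (α * betaFun α ((ns (σ j) : ℝ) + 1)) :=
          div_nonneg (by linarith) (by positivity)
        linarith
      · linarith
    · exact add_nonneg (Nat.cast_nonneg _) (mul_nonneg hα.le (by linarith))
  · -- non-last factors
    intro j hj
    rw [if_neg hj]
    set G : ℕ := ∑ l ∈ Finset.Ici j, ns (σ l) with hG_def
    have hG1 : 1 ≤ G := le_trans (hns1 (σ j))
      (Finset.single_le_sum (f := fun l => ns (σ l)) (fun _ _ => Nat.zero_le _) (Finset.mem_Ici.mpr le_rfl))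
    have hG1' : (1:ℝ) ≤ G := by exact_mod_cast hG1
    have hεG0 : 0 ≤ ε ^ G := pow_nonneg hε0.le G
    have hεG1 : ε ^ G ≤ 1 := pow_le_one₀ hε0.le hε1.le
    have hεα : 0 < ε ^ α := Real.rpow_pos_of_pos hε0 α
    have hIB : 0 ≤ incBeta ε (((∑ l ∈ Finset.Ioi j, ns (σ l) : ℕ) : ℝ) + α)
        ((ns (σ j) : ℝ) + 1) := incBeta_nonneg _ _ _ hε0.le hε1.le
    apply div_le_div₀
    · have : 0 ≤ (1 - p) * incBeta ε (((∑ l ∈ Finset.Ioi j, ns (σ l) : ℕ) : ℝ) + α)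
          ((ns (σ j) : ℝ) + 1) / ε ^ α :=
        div_nonneg (mul_nonneg (by linarith) hIB) hεα.le
      linarith
    · have : 0 ≤ (1 - p) * incBeta ε (((∑ l ∈ Finset.Ioi j, ns (σ l) : ℕ) : ℝ) + α)
          ((ns (σ j) : ℝ) + 1) / ε ^ α :=
        div_nonneg (mul_nonneg (by linarith) hIB) hεα.le
      linarith
    · nlinarith [mul_nonneg (mul_nonneg hα.le (show (0:ℝ) ≤ 1 - p by linarith))
        (show (0:ℝ) ≤ 1 - ε ^ G by linarith)]
    · nlinarith [mul_nonneg (mul_nonneg hα.le (show (0:ℝ) ≤ 1 - p by linarith)) hεG0]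
  · -- last factor
    intro j hj
    rw [if_pos hj]
    have hIoi : (∑ l ∈ Finset.Ioi j, ns (σ l)) = 0 := by
      have he : Finset.Ioi j = (∅ : Finset (Fin t)) := by
        apply Finset.eq_empty_of_forall_notMem
        intro l hl
        have h1 := l.isLt
        have h2 := Finset.mem_Ioi.mp hl
        rw [Fin.lt_def, hj] at h2
        omega
      rw [he, Finset.sum_empty]
    rw [hIoi]
    rw [show ((0:ℕ):ℝ) + α = α by norm_num]
    set m : ℕ := ns (σ j) with hm_def
    set G : ℕ := ∑ l ∈ Finset.Ici j, ns (σ l) with hG_def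
    have hG1 : 1 ≤ G := le_trans (hns1 (σ j))
      (Finset.single_le_sum (f := fun l => ns (σ l)) (fun _ _ => Nat.zero_le _)
        (Finset.mem_Ici.mpr le_rfl))
    have hG1' : (1:ℝ) ≤ G := by exact_mod_cast hG1
    have hεG0 : 0 ≤ ε ^ G := pow_nonneg hε0.le G
    have hεG1 : ε ^ G ≤ 1 := pow_le_one₀ hε0.le hε1.le
    have hεα : 0 < ε ^ α := Real.rpow_pos_of_pos hε0 α
    set B : ℝ := betaFun α ((m : ℝ) + 1) with hB_def
    have hB : 0 < B := betaFun_pos α hα m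
    have hαB : 0 < α * B := mul_pos hα hB
    set J : ℝ := ∫ x in (0:ℝ)..ε, x ^ (α - 1) * (1 - x) ^ (m : ℝ) with hJ_def
    have hJ0 : 0 ≤ J := by
      rw [hJ_def]
      apply intervalIntegral.integral_nonneg hε0.le
      intro x hx
      exact mul_nonneg (Real.rpow_nonneg hx.1 _)
        (Real.rpow_nonneg (by linarith [hx.2.trans hε1.le]) _)
    have hIB : incBeta ε α ((m : ℝ) + 1) = J / B := by
      rw [hJ_def, hB_def]
      unfold incBeta
      rw [show (m : ℝ) + 1 - 1 = (m : ℝ) by ring]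
    rw [hIB]
    set r : ℝ := α * m * ε / (α + 1) with hr_def
    have hr := key2 m (hnsn (σ j))
    rw [← hr_def] at hr
    have hKey : ε ^ α * (1 - r) ≤ α * J := by
      rw [hr_def, hJ_def]; exact key α hα m ε hε0 hε1
    have e0 : (1 - r) / (α * B) ≤ (J / B) / ε ^ α := by
      rw [div_div, div_le_div_iff₀ hαB (by positivity)]
      nlinarith [mul_le_mul_of_nonneg_right hKey hB.le]
    have hKnn : 0 ≤ (1 - p) / (α * B) := by
      rw [hr_def] at hr
      apply div_nonneg (by linarith) hαB.le
    have hNum : p + (1 - p) / (α * B) ≤ (1 + c) * (p + (1 - p) * (J / B) / ε ^ α) := by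
      have s1 : (1 - p) / (α * B) ≤ (1 + c) * (1 - r) * ((1 - p) / (α * B)) := by
        nlinarith [mul_le_mul_of_nonneg_right hr hKnn]
      have s2 : (1 + c) * ((1 - p) * ((1 - r) / (α * B))) ≤
          (1 + c) * ((1 - p) * ((J / B) / ε ^ α)) := by
        apply mul_le_mul_of_nonneg_left _ (by linarith)
        exact mul_le_mul_of_nonneg_left e0 (by linarith)
      have s3 : (1 + c) * (1 - r) * ((1 - p) / (α * B)) =
          (1 + c) * ((1 - p) * ((1 - r) / (α * B))) := by ring
      have s4 : p ≤ (1 + c) * p := by nlinarith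
      calc p + (1 - p) / (α * B)
          ≤ (1 + c) * p + (1 + c) * ((1 - p) * ((1 - r) / (α * B))) := by
            rw [← s3]; linarith
        _ ≤ (1 + c) * p + (1 + c) * ((1 - p) * ((J / B) / ε ^ α)) := by linarith
        _ = (1 + c) * (p + (1 - p) * (J / B) / ε ^ α) := by ring
    rw [← mul_div_assoc]
    apply div_le_div₀
    · have : 0 ≤ p + (1 - p) / (α * B) := by linarith
      linarith [hNum]
    · exact hNum
    · nlinarith [mul_nonneg (mul_nonneg hα.le (show (0:ℝ) ≤ 1 - p by linarith))
        (show (0:ℝ) ≤ 1 - ε ^ G by linarith)]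
    · nlinarith [mul_nonneg (mul_nonneg hα.le (show (0:ℝ) ≤ 1 - p by linarith)) hεG0]


/-- Lower ratio bound between the quasi-Bernoulli partition distributions:
for `ε ≤ 1/n`, `Pr_{0,n}(𝒜) ≤ (1 + αnε/(α+1-αεn)) Pr_{ε,n}(𝒜)` for every set partition `𝒜`
of `{1,…,n}`. -/
theorem stmt5 (α p : ℝ) (hα : 0 < α) (hp : p ∈ Set.Ioo (0:ℝ) 1) (n : ℕ) (hn : 1 ≤ n)
    (ε : ℝ) (hε : ε ∈ Set.Ioo (0:ℝ) 1) (hεn : ε ≤ 1 / n) (P : SetPartition n) :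
    PrZero α p n P ≤
      (1 + α * n * ε / (α + 1 - α * ε * n)) * PrEps α p ε n P := by
  unfold PrZero PrEps
  obtain ⟨hp0, hp1⟩ := hp
  obtain ⟨hε0, hε1⟩ := hε
  have hmem : ∀ j : Fin P.1.card, blockEnum P.1 j ∈ P.1 := by
    intro j
    unfold blockEnum
    exact Finset.coe_mem _
  have hns1 : ∀ j, 1 ≤ blockSize P j := by
    intro j
    have h := hmem j
    rcases Finset.eq_empty_or_nonempty (blockEnum P.1 j) with he | hne
    · exact absurd (he ▸ h) P.2.1
    · exact Finset.card_pos.mpr hne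
  have hnsn : ∀ j, blockSize P j ≤ n := by
    intro j
    exact le_trans (Finset.card_le_univ _) (by simp)
  have ht : 1 ≤ P.1.card := by
    obtain ⟨A, ⟨hA, _⟩, _⟩ := P.2.2 ⟨0, hn⟩
    exact Finset.card_pos.mpr ⟨A, hA⟩
  exact eppf_le α p ε hα hp0 hp1 hε0 hε1 n P.1.card hn ht hεn (blockSize P) hns1 hnsn
end

section
/- Let T be a nonempty finite type and let p, q : T → ℝ be nonnegative functions with Σ_{i∈T} p(i) = Σ_{i∈T} q(i) = 1 and q(i) > 0 for all i. Suppose c ≥ 0 satisfies p(i) ≤ (1+c) q(i) for all i∈T. Then the Kullback–Leibler divergence satisfies Σ_{i∈T} p(i) log(p(i)/q(i)) ≤ c (with the convention 0·log 0 = 0), and consequently, for every subset S ⊆ T, | Σ_{i∈S} p(i) − Σ_{i∈S} q(i) | ≤ sqrt(c/2). -/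
/-- If `p, q` are probability mass functions on a nonempty finite type with `q > 0` and
`p ≤ (1+c) q` pointwise (`c ≥ 0`), then the KL divergence `Σ p log(p/q)` is at most `c`
(with `0 log 0 = 0`), and by Pinsker's inequality the total variation distance is at most
`sqrt(c/2)`. -/
theorem stmt7 {T : Type*} [Fintype T] [Nonempty T] (p q : T → ℝ)
    (hp0 : ∀ i, 0 ≤ p i) (hq0 : ∀ i, 0 < q i)
    (hp1 : ∑ i, p i = 1) (hq1 : ∑ i, q i = 1)
    (c : ℝ) (hc : 0 ≤ c) (hpq : ∀ i, p i ≤ (1 + c) * q i) :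
    (∑ i, p i * Real.log (p i / q i)) ≤ c ∧
      ∀ S : Finset T, |(∑ i ∈ S, p i) - ∑ i ∈ S, q i| ≤ Real.sqrt (c / 2) := by
  have hc1 : (0:ℝ) < 1 + c := by linarith
  have hlog : Real.log (1 + c) ≤ c := by
    have := Real.log_le_sub_one_of_pos hc1
    linarith
  constructor
  · calc ∑ i, p i * Real.log (p i / q i) ≤ ∑ i, p i * Real.log (1 + c) := by
          apply Finset.sum_le_sum
          intro i _
          rcases eq_or_lt_of_le (hp0 i) with h | h
          · simp [← h]
          · apply mul_le_mul_of_nonneg_left _ (hp0 i)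
            apply Real.log_le_log (div_pos h (hq0 i))
            rw [div_le_iff₀ (hq0 i)]
            calc p i ≤ (1 + c) * q i := hpq i
              _ = (1 + c) * q i := rfl
      _ = Real.log (1 + c) := by rw [← Finset.sum_mul, hp1, one_mul]
      _ ≤ c := hlog
  · intro S
    classical
    set a := ∑ i ∈ S, q i with ha
    set P := ∑ i ∈ S, p i with hP
    have haS : a ≤ 1 := by
      rw [← hq1]
      exact Finset.sum_le_sum_of_subset_of_nonneg (Finset.subset_univ S)
        (fun i _ _ => (hq0 i).le)
    have ha0 : 0 ≤ a := Finset.sum_nonneg fun i _ => (hq0 i).le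
    have hP0 : 0 ≤ P := Finset.sum_nonneg fun i _ => hp0 i
    have hP1 : P ≤ 1 := by
      rw [← hp1]
      exact Finset.sum_le_sum_of_subset_of_nonneg (Finset.subset_univ S)
        (fun i _ _ => hp0 i)
    have hPca : P ≤ (1 + c) * a := by
      rw [hP, ha, Finset.mul_sum]
      exact Finset.sum_le_sum fun i _ => hpq i
    -- complement bound
    have hcompl : a - P ≤ c * (1 - a) := by
      have h1 : (∑ i ∈ Sᶜ, p i) = 1 - P := by
        rw [hP, ← hp1, eq_sub_iff_add_eq, Finset.sum_compl_add_sum]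
      have h2 : (∑ i ∈ Sᶜ, q i) = 1 - a := by
        rw [ha, ← hq1, eq_sub_iff_add_eq, Finset.sum_compl_add_sum]
      have h3 : (∑ i ∈ Sᶜ, p i) ≤ (1 + c) * ∑ i ∈ Sᶜ, q i := by
        rw [Finset.mul_sum]
        exact Finset.sum_le_sum fun i _ => hpq i
      rw [h1, h2] at h3
      linarith
    have key : |P - a| ≤ c / (1 + c) := by
      rw [abs_le]
      constructor
      · -- -(c/(1+c)) ≤ P - a : use a - P ≤ c(1-a) and a - P ≤ a
        have h4 : a - P ≤ a := by linarith
        have h7 : a - P ≤ c / (1 + c) := by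
          rw [le_div_iff₀ hc1]
          nlinarith
        linarith
      · -- P - a ≤ c a and P - a ≤ 1 - a
        have h5 : P - a ≤ c * a := by linarith
        have h6 : P - a ≤ 1 - a := by linarith
        rw [le_div_iff₀ hc1]
        nlinarith
    have key2 : c / (1 + c) ≤ Real.sqrt (c / 2) := by
      rw [show c / (1+c) = Real.sqrt ((c/(1+c))^2) by
        rw [Real.sqrt_sq (by positivity)]]
      apply Real.sqrt_le_sqrt
      rw [div_pow, div_le_div_iff₀ (by positivity) two_pos]
      nlinarith
    calc |P - a| ≤ c / (1 + c) := key
      _ ≤ Real.sqrt (c / 2) := key2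
end

section
/- Let α>0, p∈(0,1), N≥0 an integer, and ε∈(0,1] with αNε < α+1. Then [ p + (1-p)/(α B(α, N+1)) ] / [ p + (1-p) I_ε(α, N+1)/ε^α ] ≤ 1 + αNε/(α+1-αNε). -/
open MeasureTheory

lemma aux_intble (α : ℝ) (hα : 0 < α) (N : ℕ) (a b : ℝ) :
    IntervalIntegrable (fun x : ℝ => x ^ (α - 1) * (1 - x) ^ N) volume a b := by
  apply (intervalIntegral.intervalIntegrable_rpow' (by linarith : (-1:ℝ) < α - 1)).mul_continuousOn
  exact ((continuous_const.sub continuous_id).pow N).continuousOn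

lemma aux_lb (α : ℝ) (hα : 0 < α) (N : ℕ) (ε : ℝ) (hε : ε ∈ Set.Ioc (0:ℝ) 1) :
    ε ^ α / α - N * ε ^ (α + 1) / (α + 1)
      ≤ ∫ x in (0:ℝ)..ε, x ^ (α - 1) * (1 - x) ^ N := by
  have h1 : ∫ x in (0:ℝ)..ε, (x ^ (α - 1) - N * x ^ α)
      = ε ^ α / α - N * ε ^ (α + 1) / (α + 1) := by
    rw [intervalIntegral.integral_sub (intervalIntegral.intervalIntegrable_rpow'
        (by linarith : (-1:ℝ) < α - 1))
        ((intervalIntegral.intervalIntegrable_rpow' (by linarith : (-1:ℝ) < α)).const_mul _),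
      intervalIntegral.integral_const_mul, integral_rpow (Or.inl (by linarith)),
      integral_rpow (Or.inl (by linarith))]
    rw [Real.zero_rpow (by linarith : α - 1 + 1 ≠ 0), Real.zero_rpow (by linarith : α + 1 ≠ 0)]
    ring_nf
  rw [← h1]
  apply intervalIntegral.integral_mono_on hε.1.le
    ((intervalIntegral.intervalIntegrable_rpow' (by linarith : (-1:ℝ) < α - 1)).sub
      ((intervalIntegral.intervalIntegrable_rpow' (by linarith : (-1:ℝ) < α)).const_mul _))
    (aux_intble α hα N 0 ε)
  intro x hx
  rcases eq_or_lt_of_le hx.1 with rfl | hx0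
  · simp [Real.zero_rpow (by linarith : α ≠ 0)]
  have hxα : x ^ α = x ^ (α - 1) * x := by
    rw [← Real.rpow_add_one (ne_of_gt hx0)]; ring_nf
  have hb : 1 - (N:ℝ) * x ≤ (1 - x) ^ N := by
    have := one_add_mul_le_pow (a := -x) (by nlinarith [hx.2, hε.2] : (-2:ℝ) ≤ -x) N
    calc 1 - (N:ℝ) * x = 1 + (N:ℝ) * (-x) := by ring
    _ ≤ (1 + -x) ^ N := this
    _ = (1 - x) ^ N := by ring_nf
  have hxp : (0:ℝ) ≤ x ^ (α - 1) := Real.rpow_nonneg hx0.le _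
  calc x ^ (α - 1) - N * x ^ α = x ^ (α - 1) * (1 - N * x) := by rw [hxα]; ring
  _ ≤ x ^ (α - 1) * (1 - x) ^ N := mul_le_mul_of_nonneg_left hb hxp

/-- Bound on the ratio of the last factors of the `ε = 0` and `ε > 0` EPPFs of the
quasi-Bernoulli stick-breaking process: for `α > 0`, `p ∈ (0,1)`, `N ≥ 0`, `ε ∈ (0,1]`
with `αNε < α+1`,
`[p + (1-p)/(α B(α,N+1))] / [p + (1-p) I_ε(α,N+1)/ε^α] ≤ 1 + αNε/(α+1-αNε)`. -/
theorem stmt9 (α p : ℝ) (hα : 0 < α) (hp : p ∈ Set.Ioo (0:ℝ) 1)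
    (N : ℕ) (ε : ℝ) (hε : ε ∈ Set.Ioc (0:ℝ) 1) (h : α * N * ε < α + 1) :
    (p + (1 - p) / (α * betaFun α ((N : ℝ) + 1))) /
        (p + (1 - p) * incBeta ε α ((N : ℝ) + 1) / ε ^ α)
      ≤ 1 + α * N * ε / (α + 1 - α * N * ε) := by
  have hcast : ∀ x : ℝ, (1 - x) ^ ((N:ℝ) + 1 - 1) = (1 - x) ^ N := by
    intro x; rw [add_sub_cancel_right, Real.rpow_natCast]
  have hB : 0 < betaFun α ((N:ℝ) + 1) := by
    have hBdef : betaFun α ((N:ℝ) + 1) = ∫ x in (0:ℝ)..1, x ^ (α - 1) * (1 - x) ^ N := by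
      unfold betaFun; simp_rw [hcast]
    rw [hBdef]
    apply intervalIntegral.intervalIntegral_pos_of_pos_on (aux_intble α hα N 0 1) _ one_pos
    intro x hx
    exact mul_pos (Real.rpow_pos_of_pos hx.1 _) (pow_pos (by linarith [hx.2]) _)
  set B := betaFun α ((N:ℝ) + 1) with hBs
  set J := ∫ x in (0:ℝ)..ε, x ^ (α - 1) * (1 - x) ^ N with hJs
  have hI : incBeta ε α ((N:ℝ) + 1) = J / B := by
    unfold incBeta; simp_rw [hcast]; rfl
  have hJ := aux_lb α hα N ε hε
  have hE : (0:ℝ) < ε ^ α := Real.rpow_pos_of_pos hε.1 _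
  have hE1 : ε ^ (α + 1) = ε ^ α * ε := by
    rw [Real.rpow_add_one (ne_of_gt hε.1)]
  rw [hI]
  set E := ε ^ α with hEs
  set K := α * N * ε with hK
  have hs : (0:ℝ) < α + 1 - K := by linarith
  have hNnn : (0:ℝ) ≤ (N:ℝ) := Nat.cast_nonneg N
  have hKnn : 0 ≤ K := by rw [hK]; exact mul_nonneg (mul_nonneg hα.le hNnn) hε.1.le
  set c := (α + 1 - K) / (α + 1) with hc
  have hcpos : 0 < c := div_pos hs (by linarith)
  set A := p + (1 - p) / (α * B) with hA
  have hp1 : 0 < 1 - p := by linarith [hp.2]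
  have hApos : 0 < A := by
    rw [hA]; exact add_pos hp.1 (div_pos hp1 (mul_pos hα hB))
  have hJ' : E / α - (N:ℝ) * (E * ε) / (α + 1) ≤ J := by
    rw [hEs]; rw [hE1] at hJ; linarith
  have mono : (1 - p) * ((E / α - (N:ℝ) * (E * ε) / (α + 1)) / B) / E
      ≤ (1 - p) * (J / B) / E := by gcongr
  have eq1 : c * ((1 - p) / (α * B))
      = (1 - p) * ((E / α - (N:ℝ) * (E * ε) / (α + 1)) / B) / E := by
    rw [hc, hK]
    field_simp
  have key : c * ((1 - p) / (α * B)) ≤ (1 - p) * (J / B) / E := eq1 ▸ mono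
  have hc1 : c ≤ 1 := by rw [hc, div_le_one (by linarith)]; linarith
  have h3 : c * p ≤ p := mul_le_of_le_one_left hp.1.le hc1
  have hcA : c * A = c * p + c * ((1 - p) / (α * B)) := by rw [hA]; ring
  have hD : c * A ≤ p + (1 - p) * (J / B) / E := by linarith
  have hDpos : 0 < p + (1 - p) * (J / B) / E :=
    lt_of_lt_of_le (by positivity) hD
  have main : A / (p + (1 - p) * (J / B) / E) ≤ 1 / c := by
    rw [div_le_div_iff₀ hDpos hcpos]
    linarith
  have hrhs : (1:ℝ) / c = 1 + K / (α + 1 - K) := by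
    rw [hc]
    field_simp
    ring
  linarith
end

section
/- Let α>0 and let r be a nonnegative integer with 0 < α−r ≤ 1. Then for all nonnegative integers G and N, Γ(G+N+α+1) / ( Γ(G+α+1) · N! ) ≤ (1 + N/(α−r))^{G+r+1}. -/
private lemma telescope10 (c : ℝ) (hc : 0 < c) (N : ℕ) :
    ∏ m ∈ Finset.range N, (c + m + 1) / (c + m) = (c + N) / c := by
  induction N with
  | zero => simp [div_self hc.ne']
  | succ n ih =>
    rw [Finset.prod_range_succ, ih]
    have h1 : c + (n : ℝ) ≠ 0 := by positivity
    have h2 : c ≠ 0 := ne_of_gt hc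
    push_cast
    field_simp
    ring

private lemma base10 (β : ℝ) (hβ : 0 < β) (hβ1 : β ≤ 1) (N : ℕ) :
    ∏ m ∈ Finset.range N, (β + m + 1) / (m + 1) ≤ (N : ℝ) + 1 := by
  induction N with
  | zero => simp
  | succ n ih =>
    rw [Finset.prod_range_succ]
    have hfac : (β + n + 1) / ((n : ℝ) + 1) ≤ ((n : ℝ) + 2) / (n + 1) :=
      div_le_div_of_nonneg_right (by linarith) (by positivity) |>.trans_eq rfl
    calc (∏ m ∈ Finset.range n, (β + m + 1) / (m + 1)) * ((β + n + 1) / (n + 1))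
        ≤ ((n : ℝ) + 1) * (((n : ℝ) + 2) / (n + 1)) := by
          apply mul_le_mul ih hfac (by positivity) (by positivity)
      _ = (n : ℝ) + 2 := by field_simp
      _ = ((n + 1 : ℕ) : ℝ) + 1 := by push_cast; ring

private lemma aux10 (β : ℝ) (hβ : 0 < β) (hβ1 : β ≤ 1) (s N : ℕ) :
    ∏ m ∈ Finset.range N, ((s : ℝ) + β + m + 1) / (m + 1) ≤ (1 + N / β) ^ (s + 1) := by
  have hNb : (N : ℝ) ≤ (N : ℝ) / β := by
    rw [le_div_iff₀ hβ]
    nlinarith [Nat.cast_nonneg (α := ℝ) N]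
  induction s with
  | zero =>
    have h1 : ∏ m ∈ Finset.range N, (((0 : ℕ) : ℝ) + β + m + 1) / (m + 1) ≤ (N : ℝ) + 1 := by
      have := base10 β hβ hβ1 N
      simpa using this
    calc ∏ m ∈ Finset.range N, (((0 : ℕ) : ℝ) + β + m + 1) / (m + 1)
        ≤ (N : ℝ) + 1 := h1
      _ ≤ 1 + N / β := by linarith
      _ = (1 + N / β) ^ (0 + 1) := by ring
  | succ s ih =>
    have key : ∀ m ∈ Finset.range N,
        (((s + 1 : ℕ) : ℝ) + β + m + 1) / (m + 1)
          = ((s : ℝ) + β + m + 1) / (m + 1) * ((((s : ℝ) + β + 1) + m + 1) / (((s : ℝ) + β + 1) + m)) := by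
      intro m _
      have h1 : (s : ℝ) + β + m + 1 ≠ 0 := by positivity
      have h2 : (m : ℝ) + 1 ≠ 0 := by positivity
      push_cast
      field_simp
      ring
    rw [Finset.prod_congr rfl key, Finset.prod_mul_distrib,
      telescope10 ((s : ℝ) + β + 1) (by positivity) N]
    have hquot : ((s : ℝ) + β + 1 + N) / ((s : ℝ) + β + 1) ≤ 1 + N / β := by
      rw [div_le_iff₀ (by positivity)]
      have : (N : ℝ) / β * ((s : ℝ) + β + 1) = N / β * (s + 1) + N := by
        field_simp; ring
      nlinarith [div_nonneg (Nat.cast_nonneg (α := ℝ) N) hβ.le,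
        mul_le_mul_of_nonneg_left (le_refl ((s:ℝ)+1)) (div_nonneg (Nat.cast_nonneg (α := ℝ) N) hβ.le),
        hNb, Nat.cast_nonneg (α := ℝ) s]
    have hprod : (0:ℝ) ≤ ∏ m ∈ Finset.range N, ((s : ℝ) + β + m + 1) / (m + 1) := by
      apply Finset.prod_nonneg; intro m _; positivity
    calc (∏ m ∈ Finset.range N, ((s : ℝ) + β + m + 1) / (m + 1)) * (((s : ℝ) + β + 1 + N) / ((s : ℝ) + β + 1))
        ≤ (1 + N / β) ^ (s + 1) * (1 + N / β) := by
          apply mul_le_mul ih hquot (by positivity) (by positivity)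
      _ = (1 + N / β) ^ (s + 1 + 1) := by ring

private lemma gamma10 (x : ℝ) (hx : 0 < x) (N : ℕ) :
    Real.Gamma (x + N) = Real.Gamma x * ∏ m ∈ Finset.range N, (x + m) := by
  induction N with
  | zero => simp
  | succ n ih =>
    have h : x + ((n + 1 : ℕ) : ℝ) = (x + n) + 1 := by push_cast; ring
    have hne : x + (n : ℝ) ≠ 0 := by positivity
    rw [h, Real.Gamma_add_one hne, ih, Finset.prod_range_succ]
    ring

/-- Gamma-ratio bound: if `r` is the nonnegative integer with `0 < α - r ≤ 1`, then for all
nonnegative integers `G, N`, `Γ(G+N+α+1)/(Γ(G+α+1) N!) ≤ (1 + N/(α-r))^(G+r+1)`. -/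
theorem stmt10 (α : ℝ) (r : ℕ) (hr1 : 0 < α - r) (hr2 : α - r ≤ 1) (G N : ℕ) :
    Real.Gamma ((G : ℝ) + N + α + 1) /
        (Real.Gamma ((G : ℝ) + α + 1) * (Nat.factorial N : ℝ))
      ≤ (1 + (N : ℝ) / (α - r)) ^ (G + r + 1) := by
  set β := α - r with hβdef
  have hα : α = (r : ℝ) + β := by rw [hβdef]; ring
  have hα0 : 0 < α := by
    have : (0 : ℝ) ≤ (r : ℝ) := Nat.cast_nonneg r
    linarith
  have hx : 0 < (G : ℝ) + α + 1 := by positivity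
  have hGN : (G : ℝ) + N + α + 1 = ((G : ℝ) + α + 1) + N := by ring
  have hΓ : 0 < Real.Gamma ((G : ℝ) + α + 1) := Real.Gamma_pos_of_pos hx
  have hfact : (Nat.factorial N : ℝ) = ∏ m ∈ Finset.range N, ((m : ℝ) + 1) := by
    rw [← Finset.prod_range_add_one_eq_factorial]
    push_cast
    rfl
  rw [hGN, gamma10 _ hx N, hfact, mul_div_mul_left _ _ hΓ.ne', ← Finset.prod_div_distrib]
  have hre : ∀ m ∈ Finset.range N,
      ((G : ℝ) + α + 1 + m) / ((m : ℝ) + 1)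
        = (((G + r : ℕ) : ℝ) + β + m + 1) / ((m : ℝ) + 1) := by
    intro m _
    push_cast
    rw [hα]
    ring_nf
  rw [Finset.prod_congr rfl hre]
  have := aux10 β hr1 hr2 (G + r) N
  calc ∏ m ∈ Finset.range N, (((G + r : ℕ) : ℝ) + β + m + 1) / ((m : ℝ) + 1)
      ≤ (1 + (N : ℝ) / β) ^ (G + r + 1) := this
    _ = (1 + (N : ℝ) / β) ^ (G + r + 1) := rfl
end

section
/- Let α>0 and let r be a nonnegative integer with 0 < α−r ≤ 1. Then for all integers G ≥ 0, N ≥ 0 and all ε∈(0,1], (1/ε^α) · I_ε(G+α, N+1) ≤ ε^G · (1 + N/(α−r))^{G+r+1}, where I_ε(a,b)=(1/B(a,b))∫_0^ε x^{a-1}(1-x)^{b-1} dx is the regularized incomplete Beta function and B(a,b)=∫_0^1 x^{a-1}(1-x)^{b-1} dx. -/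
open MeasureTheory

open Nat in
private lemma fact_bound' (N m : ℕ) : (N + m)! ≤ m ! * N ! * (N + 1) ^ m := by
  induction m with
  | zero => simp
  | succ m ih =>
    have h1 : (N + (m+1))! = (N + m + 1) * (N + m)! := by
      rw [show N + (m+1) = (N+m) + 1 by ring, Nat.factorial_succ]
    rw [h1]
    calc (N + m + 1) * (N + m)! ≤ (N + m + 1) * (m ! * N ! * (N+1)^m) :=
          Nat.mul_le_mul_left _ ih
      _ ≤ ((m+1) * (N+1)) * (m ! * N ! * (N+1)^m) := by
          apply Nat.mul_le_mul_right; nlinarith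
      _ = (m+1)! * N ! * (N+1)^(m+1) := by
          rw [Nat.factorial_succ]; ring

open Nat in
private lemma prod_fact' (N m : ℕ) : (∏ j ∈ Finset.range N, (m + j + 1)) * m ! = (N + m)! := by
  induction N with
  | zero => simp
  | succ N ih =>
    rw [Finset.prod_range_succ, show N + 1 + m = (N + m) + 1 by ring, Nat.factorial_succ, ← ih]
    ring

open Nat in
private lemma keyProd' (a c : ℝ) (m N : ℕ) (ha : 0 < a) (ham : a ≤ m) (hc : 0 < c)
    (hc1 : c ≤ 1) :
    ∏ j ∈ Finset.range N, (a + (j + 1)) ≤ (N ! : ℝ) * (1 + N / c) ^ m := by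
  have h1 : ∏ j ∈ Finset.range N, (a + (j + 1)) ≤ ∏ j ∈ Finset.range N, ((m : ℝ) + j + 1) := by
    apply Finset.prod_le_prod
    · intro j _; positivity
    · intro j _; linarith
  have h3 : (∏ j ∈ Finset.range N, (m + j + 1)) ≤ N ! * (N + 1) ^ m := by
    have h := fact_bound' N m
    rw [← prod_fact' N m] at h
    have hm : 0 < m ! := Nat.factorial_pos m
    calc (∏ j ∈ Finset.range N, (m + j + 1))
        = (∏ j ∈ Finset.range N, (m + j + 1)) * m ! / m ! := by
          rw [Nat.mul_div_cancel _ hm]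
      _ ≤ m ! * N ! * (N+1)^m / m ! := Nat.div_le_div_right h
      _ = N ! * (N+1)^m := by rw [mul_assoc, Nat.mul_div_cancel_left _ hm]
  have h4 : ((N:ℝ) + 1) ^ m ≤ (1 + N / c) ^ m := by
    apply pow_le_pow_left₀ (by positivity)
    have : (N : ℝ) ≤ N / c := by
      rw [le_div_iff₀ hc]; nlinarith [Nat.cast_nonneg (α := ℝ) N]
    linarith
  calc ∏ j ∈ Finset.range N, (a + (j + 1))
      ≤ ((∏ j ∈ Finset.range N, (m + j + 1) : ℕ) : ℝ) := by push_cast; exact h1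
    _ ≤ ((N ! * (N + 1) ^ m : ℕ) : ℝ) := by exact_mod_cast h3
    _ = (N ! : ℝ) * ((N:ℝ) + 1) ^ m := by push_cast; ring
    _ ≤ (N ! : ℝ) * (1 + N / c) ^ m := mul_le_mul_of_nonneg_left h4 (by positivity)

open Nat in
private lemma betaFun_eq' (a : ℝ) (ha : 0 < a) (N : ℕ) :
    betaFun a ((N : ℝ) + 1) = (N ! : ℝ) / ∏ j ∈ Finset.range (N + 1), (a + j) := by
  have key : ((betaFun a ((N : ℝ) + 1) : ℝ) : ℂ) = Complex.betaIntegral a (N + 1) := by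
    rw [Complex.betaIntegral, betaFun, ← intervalIntegral.integral_ofReal]
    apply intervalIntegral.integral_congr
    intro x hx
    rw [Set.uIcc_of_le (by norm_num : (0:ℝ) ≤ 1)] at hx
    obtain ⟨hx0, hx1⟩ := hx
    have h1 : ((x ^ (a - 1) : ℝ) : ℂ) = (x : ℂ) ^ ((a : ℂ) - 1) := by
      rw [Complex.ofReal_cpow hx0]; norm_cast
    have h2 : (((1 - x) ^ ((N : ℝ) + 1 - 1) : ℝ) : ℂ) = ((1 : ℂ) - x) ^ ((N : ℂ) + 1 - 1) := by
      rw [Complex.ofReal_cpow (by linarith)]; congr 1 <;> push_cast <;> ring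
    show ((x ^ (a - 1) * (1 - x) ^ ((N : ℝ) + 1 - 1) : ℝ) : ℂ) = _
    rw [Complex.ofReal_mul, h1, h2]
  have h3 := Complex.betaIntegral_eval_nat_add_one_right (u := (a : ℂ)) (by simpa using ha) N
  rw [h3] at key
  have h4 : (((N ! : ℂ)) / ∏ j ∈ Finset.range (N + 1), ((a : ℂ) + j)) =
      (((N ! : ℝ) / ∏ j ∈ Finset.range (N + 1), (a + j) : ℝ) : ℂ) := by
    push_cast; ring
  rw [h4] at key
  exact_mod_cast key

private lemma int_bound' (a : ℝ) (ha : 0 < a) (N : ℕ) (ε : ℝ) (hε0 : 0 < ε) (hε1 : ε ≤ 1) :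
    (∫ x in (0:ℝ)..ε, x ^ (a - 1) * (1 - x) ^ ((N : ℝ) + 1 - 1)) ≤ ε ^ a / a := by
  have hexp : (0:ℝ) ≤ (N : ℝ) + 1 - 1 := by
    have := Nat.cast_nonneg (α := ℝ) N; linarith
  have hptwise : ∀ x : ℝ, 0 ≤ x → x ≤ ε →
      x ^ (a - 1) * (1 - x) ^ ((N : ℝ) + 1 - 1) ≤ x ^ (a - 1) := by
    intro x hx0 hx1
    have h1x : (0:ℝ) ≤ 1 - x := by linarith
    have h1 : (1 - x) ^ ((N : ℝ) + 1 - 1) ≤ 1 :=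
      Real.rpow_le_one h1x (by linarith) hexp
    nlinarith [Real.rpow_nonneg hx0 (a - 1), Real.rpow_nonneg h1x ((N : ℝ) + 1 - 1)]
  have hint_g : IntervalIntegrable (fun x : ℝ => x ^ (a - 1)) volume 0 ε :=
    intervalIntegral.intervalIntegrable_rpow' (by linarith)
  have hmeas : AEStronglyMeasurable (fun x : ℝ => x ^ (a - 1) * (1 - x) ^ ((N : ℝ) + 1 - 1))
      (volume.restrict (Set.uIoc (0:ℝ) ε)) := by
    apply Measurable.aestronglyMeasurable
    exact (measurable_id.pow_const _).mul ((measurable_const.sub measurable_id).pow_const _)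
  have hint_f : IntervalIntegrable (fun x : ℝ => x ^ (a - 1) * (1 - x) ^ ((N : ℝ) + 1 - 1))
      volume 0 ε := by
    apply hint_g.mono_fun hmeas
    rw [Filter.EventuallyLE, ae_restrict_iff' measurableSet_uIoc]
    apply Filter.Eventually.of_forall
    intro x hx
    rw [Set.uIoc_of_le hε0.le] at hx
    obtain ⟨hx0, hx1⟩ := hx
    have h1x : (0:ℝ) ≤ 1 - x := by linarith
    simp only [Real.norm_eq_abs]
    rw [abs_of_nonneg (by positivity : (0:ℝ) ≤ x ^ (a-1) * (1-x) ^ ((N:ℝ)+1-1)),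
      abs_of_nonneg (Real.rpow_nonneg hx0.le _)]
    exact hptwise x hx0.le hx1
  have hmono : ∫ x in (0:ℝ)..ε, x ^ (a - 1) * (1 - x) ^ ((N : ℝ) + 1 - 1) ≤
      ∫ x in (0:ℝ)..ε, x ^ (a - 1) := by
    apply intervalIntegral.integral_mono_on hε0.le hint_f hint_g
    intro x hx
    exact hptwise x hx.1 hx.2
  have hval : ∫ x in (0:ℝ)..ε, x ^ (a - 1) = ε ^ a / a := by
    rw [integral_rpow (Or.inl (by linarith))]
    rw [Real.zero_rpow (by linarith), sub_add_cancel, sub_zero]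
  linarith [hmono, hval.le, hval.ge]

/-- Bound on the regularized incomplete Beta function controlling the `ε > 0` EPPF factors:
if `r` is the nonnegative integer with `0 < α - r ≤ 1`, then for all integers `G, N ≥ 0`
and `ε ∈ (0,1]`, `(1/ε^α) I_ε(G+α, N+1) ≤ ε^G (1 + N/(α-r))^(G+r+1)`. -/
theorem stmt11 (α : ℝ) (r : ℕ) (hr1 : 0 < α - r) (hr2 : α - r ≤ 1)
    (G N : ℕ) (ε : ℝ) (hε : ε ∈ Set.Ioc (0:ℝ) 1) :
    incBeta ε ((G : ℝ) + α) ((N : ℝ) + 1) / ε ^ α ≤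
      ε ^ G * (1 + (N : ℝ) / (α - r)) ^ (G + r + 1) := by
  obtain ⟨hε0, hε1⟩ := hε
  set a : ℝ := (G : ℝ) + α with ha_def
  have hα : 0 < α := by have := Nat.cast_nonneg (α := ℝ) r; linarith
  have ha : 0 < a := by have := Nat.cast_nonneg (α := ℝ) G; rw [ha_def]; linarith
  set Q : ℝ := ∏ j ∈ Finset.range N, (a + (j + 1)) with hQ_def
  have hQpos : 0 < Q := Finset.prod_pos fun j _ => by positivity
  have hP : (∏ j ∈ Finset.range (N + 1), (a + (j : ℝ))) = Q * a := by
    rw [Finset.prod_range_succ']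
    congr 1
    · apply Finset.prod_congr rfl; intro j _; push_cast; ring
    · norm_num
  have hB : betaFun a ((N : ℝ) + 1) = ((Nat.factorial N) : ℝ) / (Q * a) := by
    rw [betaFun_eq' a ha N, hP]
  have hNf : (0:ℝ) < ((Nat.factorial N) : ℝ) := by exact_mod_cast Nat.factorial_pos N
  have hBpos : 0 < betaFun a ((N : ℝ) + 1) := by rw [hB]; positivity
  have hεα : 0 < ε ^ α := Real.rpow_pos_of_pos hε0 α
  have hεG : 0 < (ε : ℝ) ^ G := pow_pos hε0 G
  have hI := int_bound' a ha N ε hε0 hε1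
  have hεa : ε ^ a = ε ^ G * ε ^ α := by
    rw [ha_def, Real.rpow_add hε0, Real.rpow_natCast]
  have hkey : Q ≤ ((Nat.factorial N) : ℝ) * (1 + (N : ℝ) / (α - r)) ^ (G + r + 1) := by
    apply keyProd' a (α - r) (G + r + 1) N ha ?_ hr1 hr2
    push_cast; rw [ha_def]; linarith
  have step1 : incBeta ε a ((N : ℝ) + 1) / ε ^ α ≤ (ε ^ a / a) / betaFun a ((N:ℝ)+1) / ε ^ α := by
    unfold incBeta
    gcongr
  have step2 : (ε ^ a / a) / betaFun a ((N:ℝ)+1) / ε ^ α = ε ^ G * (Q / ((Nat.factorial N) : ℝ)) := by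
    rw [hB, hεa]
    field_simp
  calc incBeta ε a ((N : ℝ) + 1) / ε ^ α
      ≤ (ε ^ a / a) / betaFun a ((N:ℝ)+1) / ε ^ α := step1
    _ = ε ^ G * (Q / ((Nat.factorial N) : ℝ)) := step2
    _ ≤ ε ^ G * (1 + (N : ℝ) / (α - r)) ^ (G + r + 1) := by
        apply mul_le_mul_of_nonneg_left _ hεG.le
        rw [div_le_iff₀ hNf]
        linarith [hkey]
end

section
/- Let I be a finite index set and x, y : I → ℝ nonnegative functions with Σ_{i∈I} x_i > 0 and Σ_{i∈I} y_i > 0. Then for every subset A ⊆ I, | (Σ_{i∈A} x_i)/(Σ_{i∈I} x_i) − (Σ_{i∈A} y_i)/(Σ_{i∈I} y_i) | ≤ ( Σ_{i'∈A} Σ_{i∈I∖A} | x_{i'} y_i − x_i y_{i'} | ) / ( (Σ_{i∈I} x_i)(Σ_{i∈I} y_i) ). -/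
/-- Difference of normalized probabilities bound: for nonnegative `x, y` on a finite index
set with positive total mass, and any subset `A`,
`|Σ_A x/Σ_I x - Σ_A y/Σ_I y| ≤ (Σ_{i'∈A} Σ_{i∈Aᶜ} |x_{i'} y_i - x_i y_{i'}|)/((Σ_I x)(Σ_I y))`. -/
theorem stmt13 {I : Type*} [Fintype I] [DecidableEq I] (x y : I → ℝ)
    (hx : ∀ i, 0 ≤ x i) (hy : ∀ i, 0 ≤ y i)
    (hxs : 0 < ∑ i, x i) (hys : 0 < ∑ i, y i) (A : Finset I) :
    |(∑ i ∈ A, x i) / (∑ i, x i) - (∑ i ∈ A, y i) / (∑ i, y i)| ≤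
      (∑ i' ∈ A, ∑ i ∈ Aᶜ, |x i' * y i - x i * y i'|) /
        ((∑ i, x i) * (∑ i, y i)) := by
  have hx0 : (∑ i, x i) ≠ 0 := hxs.ne'
  have hy0 : (∑ i, y i) ≠ 0 := hys.ne'
  rw [div_sub_div _ _ hx0 hy0, abs_div, abs_of_pos (mul_pos hxs hys),
    div_le_div_iff_of_pos_right (mul_pos hxs hys)]
  have key : (∑ i ∈ A, x i) * (∑ i, y i) - (∑ i, x i) * (∑ i ∈ A, y i)
      = ∑ i' ∈ A, ∑ i ∈ Aᶜ, (x i' * y i - x i * y i') := by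
    have h1 : (∑ i, y i) = (∑ i ∈ A, y i) + ∑ i ∈ Aᶜ, y i := by
      rw [Finset.sum_add_sum_compl]
    have h2 : (∑ i, x i) = (∑ i ∈ A, x i) + ∑ i ∈ Aᶜ, x i := by
      rw [Finset.sum_add_sum_compl]
    rw [h1, h2]
    rw [Finset.sum_comm (t := Aᶜ) (f := fun i' i => x i' * y i - x i * y i')]
    simp only [Finset.sum_sub_distrib, ← Finset.sum_mul, ← Finset.mul_sum]
    ring
  calc |(∑ i ∈ A, x i) * (∑ i, y i) - (∑ i, x i) * (∑ i ∈ A, y i)|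
      = |∑ i' ∈ A, ∑ i ∈ Aᶜ, (x i' * y i - x i * y i')| := by rw [key]
    _ ≤ ∑ i' ∈ A, ∑ i ∈ Aᶜ, |x i' * y i - x i * y i'| := by
        refine (Finset.abs_sum_le_sum_abs _ _).trans ?_
        exact Finset.sum_le_sum fun i' _ => Finset.abs_sum_le_sum_abs _ _
end

section
/- Let n ≥ 2 be an integer, α > 0, and y : {1,…,n} → ℝ. Then (α √(n+1) / (2 (n−1)!)) · Σ_S (|S|−1)! (n−|S|−1)! · (1/(√(|S|+1)√(n−|S|+1))) · exp( (Σ_{i∈S} y_i)²/(2(|S|+1)) + (Σ_{i∉S} y_i)²/(2(n−|S|+1)) − (Σ_{i=1}^n y_i)²/(2(n+1)) ) ≤ (α √(n+1)/2) · exp( (Σ_{i=1}^n y_i²)/2 ) · ( log(n−1) + 1 ), where the sum ranges over all subsets S of {1,…,n} with ∅ ⊊ S ⊊ {1,…,n}. -/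
set_option maxHeartbeats 1000000 in
/-- The central computation in the inconsistency proof for the Dirichlet process mixture
with vanishing concentration: the ratio `p(y, T=2)/p(y, T=1)` of marginal likelihoods
(written as a sum over proper nonempty subsets `S` of `{1,…,n}`, each unordered two-block
partition counted twice) is bounded by
`(α√(n+1)/2) exp((Σ y_i²)/2)(log(n-1)+1)`. -/
theorem stmt18 (n : ℕ) (hn : 2 ≤ n) (α : ℝ) (hα : 0 < α) (y : Fin n → ℝ) :
    α * Real.sqrt ((n : ℝ) + 1) / (2 * (Nat.factorial (n - 1) : ℝ)) *
        ∑ S ∈ (Finset.univ : Finset (Finset (Fin n))).filter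
            (fun S => S ≠ ∅ ∧ S ≠ Finset.univ),
          (Nat.factorial (S.card - 1) : ℝ) * (Nat.factorial (n - S.card - 1) : ℝ) *
            (1 / (Real.sqrt ((S.card : ℝ) + 1) * Real.sqrt ((n : ℝ) - S.card + 1))) *
            Real.exp ((∑ i ∈ S, y i) ^ 2 / (2 * ((S.card : ℝ) + 1)) +
              (∑ i ∈ Sᶜ, y i) ^ 2 / (2 * ((n : ℝ) - S.card + 1)) -
              (∑ i, y i) ^ 2 / (2 * ((n : ℝ) + 1)))
      ≤ α * Real.sqrt ((n : ℝ) + 1) / 2 * Real.exp ((∑ i, y i ^ 2) / 2) *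
          (Real.log ((n : ℝ) - 1) + 1) := by
  have hn1 : 1 ≤ n := le_trans (by norm_num) hn
  set f : ℝ := (Nat.factorial (n - 1) : ℝ) with hf
  have hfpos : (0:ℝ) < f := by
    have h : 0 < Nat.factorial (n - 1) := Nat.factorial_pos _
    rw [hf]; exact_mod_cast h
  set C : ℝ := (∑ i, y i ^ 2) / 2 with hC
  set L : ℝ := Real.log ((n : ℝ) - 1) + 1 with hL
  set F : Finset (Finset (Fin n)) :=
    (Finset.univ : Finset (Finset (Fin n))).filter (fun S => S ≠ ∅ ∧ S ≠ Finset.univ) with hFdef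
  -- card bounds for members of F
  have hcard : ∀ S ∈ F, 1 ≤ S.card ∧ S.card ≤ n - 1 := by
    intro S hS
    simp only [hFdef, Finset.mem_filter, Finset.mem_univ, true_and] at hS
    obtain ⟨h1, h2⟩ := hS
    refine ⟨Finset.card_pos.mpr (Finset.nonempty_iff_ne_empty.mpr h1), ?_⟩
    have : S.card < n := by
      have := (Finset.card_lt_iff_ne_univ S).mpr h2
      simpa using this
    omega
  -- the exponent bound
  have hexp : ∀ S : Finset (Fin n),
      (∑ i ∈ S, y i) ^ 2 / (2 * ((S.card : ℝ) + 1)) +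
        (∑ i ∈ Sᶜ, y i) ^ 2 / (2 * ((n : ℝ) - S.card + 1)) -
        (∑ i, y i) ^ 2 / (2 * ((n : ℝ) + 1)) ≤ C := by
    intro S
    have hkn : S.card ≤ n := by
      have := Finset.card_le_univ S; simpa using this
    have hcompl : ((Sᶜ : Finset (Fin n)).card : ℝ) = (n : ℝ) - (S.card : ℝ) := by
      rw [Finset.card_compl, Fintype.card_fin, Nat.cast_sub hkn]
    have hP : (0:ℝ) ≤ ∑ i ∈ S, y i ^ 2 := by positivity
    have hQ : (0:ℝ) ≤ ∑ i ∈ Sᶜ, y i ^ 2 := by positivity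
    have h1 : (∑ i ∈ S, y i) ^ 2 ≤ (S.card : ℝ) * ∑ i ∈ S, y i ^ 2 :=
      sq_sum_le_card_mul_sum_sq
    have h2 : (∑ i ∈ Sᶜ, y i) ^ 2 ≤ ((Sᶜ : Finset (Fin n)).card : ℝ) * ∑ i ∈ Sᶜ, y i ^ 2 :=
      sq_sum_le_card_mul_sum_sq
    have t1 : (∑ i ∈ S, y i) ^ 2 / (2 * ((S.card : ℝ) + 1)) ≤ (∑ i ∈ S, y i ^ 2) / 2 := by
      rw [div_le_div_iff₀ (by positivity) (by norm_num)]
      have hk0 : (0:ℝ) ≤ (S.card : ℝ) := Nat.cast_nonneg _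
      nlinarith [h1]
    have t2 : (∑ i ∈ Sᶜ, y i) ^ 2 / (2 * ((n : ℝ) - S.card + 1)) ≤ (∑ i ∈ Sᶜ, y i ^ 2) / 2 := by
      rw [← hcompl, div_le_div_iff₀ (by positivity) (by norm_num)]
      have hk0 : (0:ℝ) ≤ ((Sᶜ : Finset (Fin n)).card : ℝ) := Nat.cast_nonneg _
      nlinarith [h2]
    have hPQ : (∑ i ∈ S, y i ^ 2) + (∑ i ∈ Sᶜ, y i ^ 2) = ∑ i, y i ^ 2 :=
      Finset.sum_add_sum_compl S _
    have t3 : (0:ℝ) ≤ (∑ i, y i) ^ 2 / (2 * ((n : ℝ) + 1)) := by positivity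
    rw [hC]; linarith
  -- termwise bound
  have hterm : ∀ S ∈ F,
      (Nat.factorial (S.card - 1) : ℝ) * (Nat.factorial (n - S.card - 1) : ℝ) *
          (1 / (Real.sqrt ((S.card : ℝ) + 1) * Real.sqrt ((n : ℝ) - S.card + 1))) *
          Real.exp ((∑ i ∈ S, y i) ^ 2 / (2 * ((S.card : ℝ) + 1)) +
            (∑ i ∈ Sᶜ, y i) ^ 2 / (2 * ((n : ℝ) - S.card + 1)) -
            (∑ i, y i) ^ 2 / (2 * ((n : ℝ) + 1))) ≤
        (Nat.factorial (S.card - 1) : ℝ) * (Nat.factorial (n - S.card - 1) : ℝ) *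
          (1 / Real.sqrt (2 * (n : ℝ)) * Real.exp C) := by
    intro S hS
    obtain ⟨hk1, hk2⟩ := hcard S hS
    have hk1' : (1:ℝ) ≤ (S.card : ℝ) := by exact_mod_cast hk1
    have hk2' : (S.card : ℝ) ≤ (n : ℝ) - 1 := by
      have : (S.card : ℝ) ≤ ((n - 1 : ℕ) : ℝ) := by exact_mod_cast hk2
      rwa [Nat.cast_sub hn1, Nat.cast_one] at this
    have hsqrt : Real.sqrt (2 * (n : ℝ)) ≤
        Real.sqrt ((S.card : ℝ) + 1) * Real.sqrt ((n : ℝ) - S.card + 1) := by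
      rw [← Real.sqrt_mul (by positivity)]
      apply Real.sqrt_le_sqrt
      nlinarith [mul_nonneg (sub_nonneg.mpr hk1') (sub_nonneg.mpr hk2')]
    have hinv : 1 / (Real.sqrt ((S.card : ℝ) + 1) * Real.sqrt ((n : ℝ) - S.card + 1)) ≤
        1 / Real.sqrt (2 * (n : ℝ)) := by
      apply one_div_le_one_div_of_le _ hsqrt
      have : (0:ℝ) < 2 * (n : ℝ) := by positivity
      exact Real.sqrt_pos.mpr this
    have hcd : 1 / (Real.sqrt ((S.card : ℝ) + 1) * Real.sqrt ((n : ℝ) - S.card + 1)) *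
        Real.exp ((∑ i ∈ S, y i) ^ 2 / (2 * ((S.card : ℝ) + 1)) +
          (∑ i ∈ Sᶜ, y i) ^ 2 / (2 * ((n : ℝ) - S.card + 1)) -
          (∑ i, y i) ^ 2 / (2 * ((n : ℝ) + 1))) ≤
        1 / Real.sqrt (2 * (n : ℝ)) * Real.exp C :=
      mul_le_mul hinv (Real.exp_le_exp.mpr (hexp S)) (Real.exp_pos _).le (by positivity)
    calc (Nat.factorial (S.card - 1) : ℝ) * (Nat.factorial (n - S.card - 1) : ℝ) *
          (1 / (Real.sqrt ((S.card : ℝ) + 1) * Real.sqrt ((n : ℝ) - S.card + 1))) *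
          Real.exp ((∑ i ∈ S, y i) ^ 2 / (2 * ((S.card : ℝ) + 1)) +
            (∑ i ∈ Sᶜ, y i) ^ 2 / (2 * ((n : ℝ) - S.card + 1)) -
            (∑ i, y i) ^ 2 / (2 * ((n : ℝ) + 1)))
        = (Nat.factorial (S.card - 1) : ℝ) * (Nat.factorial (n - S.card - 1) : ℝ) *
          (1 / (Real.sqrt ((S.card : ℝ) + 1) * Real.sqrt ((n : ℝ) - S.card + 1)) *
          Real.exp ((∑ i ∈ S, y i) ^ 2 / (2 * ((S.card : ℝ) + 1)) +
            (∑ i ∈ Sᶜ, y i) ^ 2 / (2 * ((n : ℝ) - S.card + 1)) -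
            (∑ i, y i) ^ 2 / (2 * ((n : ℝ) + 1)))) := by ring
      _ ≤ _ := mul_le_mul_of_nonneg_left hcd (by positivity)
  -- sum of factorial weights
  set H : ℝ := ∑ k ∈ Finset.Icc 1 (n - 1), (1 : ℝ) / (k : ℝ) with hH
  have hsumfact : ∑ S ∈ F, ((Nat.factorial (S.card - 1) : ℝ) *
      (Nat.factorial (n - S.card - 1) : ℝ)) = f * (2 * H) := by
    have hmaps : ∀ S ∈ F, S.card ∈ Finset.Icc 1 (n - 1) := by
      intro S hS
      exact Finset.mem_Icc.mpr ⟨(hcard S hS).1, (hcard S hS).2⟩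
    rw [← Finset.sum_fiberwise_of_maps_to hmaps]
    have hfiber : ∀ k ∈ Finset.Icc 1 (n - 1),
        F.filter (fun S => S.card = k) = Finset.powersetCard k (Finset.univ : Finset (Fin n)) := by
      intro k hk
      rw [Finset.mem_Icc] at hk
      ext S
      simp only [hFdef, Finset.mem_filter, Finset.mem_univ, true_and,
        Finset.mem_powersetCard_univ]
      constructor
      · rintro ⟨-, h⟩; exact h
      · intro h
        refine ⟨⟨?_, ?_⟩, h⟩
        · intro he
          rw [he, Finset.card_empty] at h
          omega
        · intro hu
          rw [hu] at h
          simp only [Finset.card_univ, Fintype.card_fin] at h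
          omega
    have hstep : ∀ k ∈ Finset.Icc 1 (n - 1),
        (∑ S ∈ F.filter (fun S => S.card = k),
          ((Nat.factorial (S.card - 1) : ℝ) * (Nat.factorial (n - S.card - 1) : ℝ)))
          = f * ((1 : ℝ) / (k : ℝ) + (1 : ℝ) / ((n - k : ℕ) : ℝ)) := by
      intro k hk
      rw [hfiber k hk]
      rw [Finset.mem_Icc] at hk
      have hk2 : k ≤ n := by omega
      rw [Finset.sum_congr rfl (fun S hS => by
        rw [Finset.mem_powersetCard_univ.mp hS])]
      rw [Finset.sum_const, Finset.card_powersetCard, Finset.card_univ, Fintype.card_fin,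
        nsmul_eq_mul]
      -- now: (n.choose k) * (fact(k-1) * fact(n-k-1)) = f * (1/k + 1/(n-k))
      rw [Nat.cast_choose ℝ hk2]
      have e1 : (Nat.factorial n : ℝ) = (n : ℝ) * f := by
        rw [hf]; exact_mod_cast (Nat.mul_factorial_pred (by omega : n ≠ 0)).symm
      have e2 : (Nat.factorial k : ℝ) = (k : ℝ) * (Nat.factorial (k - 1) : ℝ) := by
        exact_mod_cast (Nat.mul_factorial_pred (by omega : k ≠ 0)).symm
      have e3 : (Nat.factorial (n - k) : ℝ) =
          ((n - k : ℕ) : ℝ) * (Nat.factorial (n - k - 1) : ℝ) := by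
        exact_mod_cast (Nat.mul_factorial_pred (by omega : n - k ≠ 0)).symm
      rw [e1, e2, e3, Nat.cast_sub hk2]
      have hk0 : ((k : ℕ) : ℝ) ≠ 0 := Nat.cast_ne_zero.mpr (by omega)
      have hnk0 : (n : ℝ) - (k : ℝ) ≠ 0 := by
        have h1 : (k : ℝ) < (n : ℝ) := by exact_mod_cast (by omega : k < n)
        linarith
      have hfk : (Nat.factorial (k - 1) : ℝ) ≠ 0 :=
        Nat.cast_ne_zero.mpr (Nat.factorial_ne_zero _)
      have hfnk : (Nat.factorial (n - k - 1) : ℝ) ≠ 0 :=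
        Nat.cast_ne_zero.mpr (Nat.factorial_ne_zero _)
      field_simp
      ring
    rw [Finset.sum_congr rfl hstep, ← Finset.mul_sum, Finset.sum_add_distrib]
    have hrefl : ∑ k ∈ Finset.Icc 1 (n - 1), (1 : ℝ) / ((n - k : ℕ) : ℝ)
        = ∑ k ∈ Finset.Icc 1 (n - 1), (1 : ℝ) / (k : ℝ) := by
      refine Finset.sum_nbij' (fun k => n - k) (fun k => n - k) ?_ ?_ ?_ ?_ ?_
      · intro a ha
        simp only [Finset.mem_Icc] at ha ⊢
        omega
      · intro a ha
        simp only [Finset.mem_Icc] at ha ⊢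
        omega
      · intro a ha
        simp only [Finset.mem_Icc] at ha
        omega
      · intro a ha
        simp only [Finset.mem_Icc] at ha
        omega
      · intro a ha
        rfl
    rw [hrefl, hH]
    ring
  have hHnonneg : (0:ℝ) ≤ H := by
    rw [hH]; positivity
  have hHle : H ≤ L := by
    have h1 : ((harmonic (n - 1) : ℚ) : ℝ) = H := by
      rw [hH, harmonic_eq_sum_Icc]
      push_cast
      simp [one_div]
    have h2 := harmonic_le_one_add_log (n - 1)
    have hc : ((n - 1 : ℕ) : ℝ) = (n : ℝ) - 1 := by
      rw [Nat.cast_sub hn1, Nat.cast_one]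
    rw [hc] at h2
    rw [hL]; linarith [h1 ▸ h2]
  -- assemble
  have hsum_le : (∑ S ∈ F,
      (Nat.factorial (S.card - 1) : ℝ) * (Nat.factorial (n - S.card - 1) : ℝ) *
        (1 / (Real.sqrt ((S.card : ℝ) + 1) * Real.sqrt ((n : ℝ) - S.card + 1))) *
        Real.exp ((∑ i ∈ S, y i) ^ 2 / (2 * ((S.card : ℝ) + 1)) +
          (∑ i ∈ Sᶜ, y i) ^ 2 / (2 * ((n : ℝ) - S.card + 1)) -
          (∑ i, y i) ^ 2 / (2 * ((n : ℝ) + 1)))) ≤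
      (f * (2 * H)) * (1 / Real.sqrt (2 * (n : ℝ)) * Real.exp C) := by
    calc (∑ S ∈ F, _) ≤ ∑ S ∈ F, (Nat.factorial (S.card - 1) : ℝ) *
          (Nat.factorial (n - S.card - 1) : ℝ) *
          (1 / Real.sqrt (2 * (n : ℝ)) * Real.exp C) := Finset.sum_le_sum hterm
      _ = (∑ S ∈ F, (Nat.factorial (S.card - 1) : ℝ) *
            (Nat.factorial (n - S.card - 1) : ℝ)) *
            (1 / Real.sqrt (2 * (n : ℝ)) * Real.exp C) := by
          rw [Finset.sum_mul]
      _ = (f * (2 * H)) * (1 / Real.sqrt (2 * (n : ℝ)) * Real.exp C) := by rw [hsumfact]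
  have hprepos : (0:ℝ) < α * Real.sqrt ((n : ℝ) + 1) / (2 * f) := by
    have : (0:ℝ) < Real.sqrt ((n : ℝ) + 1) := Real.sqrt_pos.mpr (by positivity)
    positivity
  calc α * Real.sqrt ((n : ℝ) + 1) / (2 * f) * (∑ S ∈ F, _)
      ≤ α * Real.sqrt ((n : ℝ) + 1) / (2 * f) *
          ((f * (2 * H)) * (1 / Real.sqrt (2 * (n : ℝ)) * Real.exp C)) :=
        mul_le_mul_of_nonneg_left hsum_le hprepos.le
    _ ≤ α * Real.sqrt ((n : ℝ) + 1) / 2 * Real.exp C * L := by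
        have hs2n : (2:ℝ) ≤ Real.sqrt (2 * (n : ℝ)) := by
          have h4 : (4:ℝ) ≤ 2 * (n : ℝ) := by
            have : (2:ℝ) ≤ (n : ℝ) := by exact_mod_cast hn
            linarith
          have := Real.sqrt_le_sqrt h4
          rwa [show (4:ℝ) = 2 ^ 2 by norm_num, Real.sqrt_sq (by norm_num : (0:ℝ) ≤ 2)] at this
        have hs2npos : (0:ℝ) < Real.sqrt (2 * (n : ℝ)) := lt_of_lt_of_le (by norm_num) hs2n
        have hLpos : (0:ℝ) ≤ L := le_trans hHnonneg hHle
        have hkey : 2 * H ≤ L * Real.sqrt (2 * (n : ℝ)) := by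
          nlinarith [mul_le_mul_of_nonneg_left hs2n hLpos]
        have heq : α * Real.sqrt ((n : ℝ) + 1) / (2 * f) *
            ((f * (2 * H)) * (1 / Real.sqrt (2 * (n : ℝ)) * Real.exp C)) =
            α * Real.sqrt ((n : ℝ) + 1) * Real.exp C * (2 * H) /
              (2 * Real.sqrt (2 * (n : ℝ))) := by
          field_simp
        rw [heq]
        rw [div_le_iff₀ (by positivity)]
        have hnn : (0:ℝ) ≤ α * Real.sqrt ((n : ℝ) + 1) * Real.exp C := by positivity
        calc α * Real.sqrt ((n : ℝ) + 1) * Real.exp C * (2 * H)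
            ≤ α * Real.sqrt ((n : ℝ) + 1) * Real.exp C * (L * Real.sqrt (2 * (n : ℝ))) :=
              mul_le_mul_of_nonneg_left hkey hnn
          _ = α * Real.sqrt ((n : ℝ) + 1) / 2 * Real.exp C * L * (2 * Real.sqrt (2 * (n : ℝ))) := by
              ring
end
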